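/- arXiv:2310.01786 — 3 statements merged into one kernel-verified Lean document; each statement's English description precedes it below -/
import Mathlib

section
/- Let ∇ denote the differential operator ∑_{i=1}^n ∂/∂x_i on the polynomial ring C[x_1,...,x_n]. Then for any partition λ with at most n parts, ∇ s_λ(x_1,...,x_n) = ∑_{(r,c)} (n - r + c) · s_{λ∖(r,c)}(x_1,...,x_n), where the sum is over all outside corners (r,c) of λ (cells whose removal leaves a partition) and λ∖(r,c) denotes λ with that corner removed. -/
open MvPolynomial Finset
open scoped Classical

/-- The Schur polynomial in `n` variables indexed by a Young diagram `μ`: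
the sum over all semistandard fillings of the cells of `μ` with values in `Fin n`
(weakly increasing along rows, strictly increasing down columns) of the product
of the corresponding variables. -/
noncomputable def schur (μ : YoungDiagram) (n : ℕ) : MvPolynomial (Fin n) ℚ :=
  ∑ T : μ.cells → Fin n,
    if ((∀ a b : μ.cells, a.1.1 = b.1.1 → a.1.2 ≤ b.1.2 → T a ≤ T b) ∧
        (∀ a b : μ.cells, a.1.2 = b.1.2 → a.1.1 < b.1.1 → T a < T b))
    then ∏ c, MvPolynomial.X (T c) else 0

/-- Chern plethysm `\overline{s}_λ(x_1,…,x_n)`: the Schur polynomial `s_λ` evaluated at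
the `n` quantities `(x_1+⋯+x_n) - x_i`. -/
noncomputable def sbar (μ : YoungDiagram) (n : ℕ) : MvPolynomial (Fin n) ℚ :=
  MvPolynomial.aeval (fun i : Fin n => (∑ j : Fin n, X j) - X i) (schur μ n)

/-- The number of standard fillings of a finite set `s` of cells: bijective fillings by
`0, 1, …, |s|-1` that strictly increase along rows and down columns. -/
noncomputable def sytCountCells (s : Finset (ℕ × ℕ)) : ℕ :=
  Nat.card {T : s → ℕ //
    Function.Injective T ∧ (∀ x, T x < s.card) ∧
    (∀ a b : s, a.1.1 = b.1.1 → a.1.2 < b.1.2 → T a < T b) ∧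
    (∀ a b : s, a.1.2 = b.1.2 → a.1.1 < b.1.1 → T a < T b)}

/-- `f^{λ/μ}`: the number of standard Young tableaux of skew shape `λ/μ`,
with the convention that it is `0` if `μ ⊄ λ`. -/
noncomputable def sytSkew (lam nu : YoungDiagram) : ℕ :=
  if nu ≤ lam then sytCountCells (lam.cells \ nu.cells) else 0

/-- The number of semistandard fillings of a finite set `s` of cells with entries in
`{lo, …, hi}` (weakly increasing along rows, strictly increasing down columns). -/
noncomputable def ssytCountCells (s : Finset (ℕ × ℕ)) (lo hi : ℕ) : ℕ :=
  Nat.card {T : s → ℕ //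
    (∀ x, lo ≤ T x ∧ T x ≤ hi) ∧
    (∀ a b : s, a.1.1 = b.1.1 → a.1.2 ≤ b.1.2 → T a ≤ T b) ∧
    (∀ a b : s, a.1.2 = b.1.2 → a.1.1 < b.1.1 → T a < T b)}

/-- The single-row Young diagram `(k)`. -/
noncomputable def rowD (k : ℕ) : YoungDiagram :=
  YoungDiagram.ofRowLens [k] (List.sortedGE_iff_pairwise.mpr (List.pairwise_singleton _ k))

/-- The single-column Young diagram `(1^k)`. -/
noncomputable def colD (k : ℕ) : YoungDiagram := (rowD k).transpose

namespace NablaSchur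

def IsSSYT {μ : YoungDiagram} {n : ℕ} (T : μ.cells → Fin n) : Prop :=
  (∀ a b : μ.cells, a.1.1 = b.1.1 → a.1.2 ≤ b.1.2 → T a ≤ T b) ∧
  (∀ a b : μ.cells, a.1.2 = b.1.2 → a.1.1 < b.1.1 → T a < T b)

lemma schur_eq (μ : YoungDiagram) (n : ℕ) :
    schur μ n = ∑ T : μ.cells → Fin n, if IsSSYT T then ∏ c, X (T c) else 0 := by
  unfold schur IsSSYT
  congr 1
  funext T
  congr

noncomputable def subdiags (l : YoungDiagram) : Finset YoungDiagram :=
  ((l.cells.powerset.filter fun (s : Finset (ℕ × ℕ)) =>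
      IsLowerSet (↑s : Set (ℕ × ℕ)))).attach.image
    fun s => (⟨s.1, by have h := s.2; rw [Finset.mem_filter] at h; exact h.2⟩ : YoungDiagram)

lemma mem_subdiags {l ν : YoungDiagram} : ν ∈ subdiags l ↔ ν ≤ l := by
  constructor
  · intro h
    simp only [subdiags, Finset.mem_image, Finset.mem_attach, true_and] at h
    obtain ⟨s, hs⟩ := h
    rw [← YoungDiagram.cells_subset_iff, ← hs]
    exact Finset.mem_powerset.mp (Finset.mem_filter.mp s.2).1
  · intro h
    have hc : ν.cells ∈ l.cells.powerset.filter fun (s : Finset (ℕ × ℕ)) =>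
        IsLowerSet (↑s : Set (ℕ × ℕ)) := by
      refine Finset.mem_filter.mpr ⟨Finset.mem_powerset.mpr ?_, ?_⟩
      · exact YoungDiagram.cells_subset_iff.mpr h
      · exact ν.isLowerSet
    refine Finset.mem_image.mpr ⟨⟨ν.cells, hc⟩, Finset.mem_attach _ _, ?_⟩
    exact YoungDiagram.ext rfl

def IsStrip (l m : YoungDiagram) : Prop :=
  ∀ c : ℕ × ℕ, c ∈ l → c ∉ m → (c.1 + 1, c.2) ∉ l

noncomputable def w (k : ℕ) (s : Finset (ℕ × ℕ)) : ℚ :=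
  ∑ rc ∈ s, ((k : ℚ) - rc.1 + rc.2)

variable {m : ℕ} {l μ : YoungDiagram}

lemma cells_sub (h : μ ≤ l) {c : ℕ × ℕ} (hc : c ∈ μ.cells) : c ∈ l.cells :=
  YoungDiagram.cells_subset_iff.mpr h hc

/-- cells of `T` carrying a value `≠ last`. -/
noncomputable def innerCells (l : YoungDiagram) (m : ℕ) (T : l.cells → Fin (m + 1)) :
    Finset (ℕ × ℕ) :=
  (l.cells.attach.filter (fun c => T c ≠ Fin.last m)).image Subtype.val

lemma mem_innerCells {T : l.cells → Fin (m + 1)} {c : ℕ × ℕ} :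
    c ∈ innerCells l m T ↔ ∃ h : c ∈ l.cells, T ⟨c, h⟩ ≠ Fin.last m := by
  constructor
  · intro h
    obtain ⟨⟨c', hc'⟩, hmem, rfl⟩ := Finset.mem_image.mp h
    exact ⟨hc', (Finset.mem_filter.mp hmem).2⟩
  · rintro ⟨h, hne⟩
    exact Finset.mem_image.mpr ⟨⟨c, h⟩, Finset.mem_filter.mpr ⟨Finset.mem_attach _ _, hne⟩, rfl⟩

lemma innerCells_subset {T : l.cells → Fin (m + 1)} : innerCells l m T ⊆ l.cells := by
  intro c hc; exact (mem_innerCells.mp hc).1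

lemma innerCells_lower {T : l.cells → Fin (m + 1)} (hT : IsSSYT T) :
    IsLowerSet (↑(innerCells l m T) : Set (ℕ × ℕ)) := by
  rintro ⟨a1, a2⟩ ⟨b1, b2⟩ hba hmem
  simp only [Finset.coe_sort_coe, Finset.mem_coe] at hmem ⊢
  obtain ⟨ha, hne⟩ := mem_innerCells.mp hmem
  obtain ⟨h1, h2⟩ := hba
  simp only at h1 h2
  have hbl : (b1, b2) ∈ l.cells := l.up_left_mem h1 h2 ha
  have hmid : (b1, a2) ∈ l.cells := l.up_left_mem h1 le_rfl ha
  have step1 : T ⟨(b1, b2), hbl⟩ ≤ T ⟨(b1, a2), hmid⟩ := hT.1 _ _ rfl h2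
  have step2 : T ⟨(b1, a2), hmid⟩ ≤ T ⟨(a1, a2), ha⟩ := by
    rcases eq_or_lt_of_le h1 with heq | hlt
    · subst heq; exact le_rfl
    · exact le_of_lt (hT.2 _ _ rfl hlt)
  refine mem_innerCells.mpr ⟨hbl, ?_⟩
  have hlast : T ⟨(a1, a2), ha⟩ < Fin.last m :=
    lt_of_le_of_ne (Fin.le_last _) hne
  exact Fin.ne_last_of_lt (lt_of_le_of_lt (le_trans step1 step2) hlast)

/-- The inner shape of a filling, as a Young diagram (junk `⊥` if not lower). -/
noncomputable def gD (l : YoungDiagram) (m : ℕ) (T : l.cells → Fin (m + 1)) : YoungDiagram :=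
  if h : IsLowerSet (↑(innerCells l m T) : Set (ℕ × ℕ)) then ⟨innerCells l m T, h⟩ else ⊥

lemma gD_le (T : l.cells → Fin (m + 1)) : gD l m T ≤ l := by
  unfold gD
  split_ifs with h
  · rw [← YoungDiagram.cells_subset_iff]; exact innerCells_subset
  · exact bot_le

lemma gD_cells {T : l.cells → Fin (m + 1)} (hT : IsSSYT T) :
    (gD l m T).cells = innerCells l m T := by
  unfold gD; rw [dif_pos (innerCells_lower hT)]

lemma gD_strip {T : l.cells → Fin (m + 1)} (hT : IsSSYT T) : IsStrip l (gD l m T) := by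
  intro c hcl hcm hbelow
  have hcl' : c ∈ l.cells := hcl
  have hTc : T ⟨c, hcl'⟩ = Fin.last m := by
    by_contra hne
    exact hcm (by rw [← YoungDiagram.mem_cells, gD_cells hT]; exact mem_innerCells.mpr ⟨hcl', hne⟩)
  have hb : ((c.1 + 1, c.2) : ℕ × ℕ) ∈ l.cells := hbelow
  have : T ⟨c, hcl'⟩ < T ⟨(c.1 + 1, c.2), hb⟩ := hT.2 ⟨c, hcl'⟩ ⟨(c.1 + 1, c.2), hb⟩ rfl (by simp)
  rw [hTc] at this
  exact absurd (Fin.le_last _) (not_le_of_gt this)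

lemma fiber_ne_last {T : l.cells → Fin (m + 1)} (hT : IsSSYT T) (hg : gD l m T = μ)
    {c : ℕ × ℕ} (hc : c ∈ μ.cells) (hcl : c ∈ l.cells) : T ⟨c, hcl⟩ ≠ Fin.last m := by
  rw [← hg, gD_cells hT] at hc
  obtain ⟨h, hne⟩ := mem_innerCells.mp hc
  exact hne

lemma fiber_last {T : l.cells → Fin (m + 1)} (hT : IsSSYT T) (hg : gD l m T = μ)
    {c : ℕ × ℕ} (hc : c ∉ μ.cells) (hcl : c ∈ l.cells) : T ⟨c, hcl⟩ = Fin.last m := by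
  by_contra hne
  exact hc (by rw [← hg, gD_cells hT]; exact mem_innerCells.mpr ⟨hcl, hne⟩)


/-- Extend a filling of `μ` by `last` on `l \ μ`. -/
noncomputable def bwdT (l μ : YoungDiagram) (m : ℕ) (T' : μ.cells → Fin m) :
    l.cells → Fin (m + 1) :=
  fun c => if h : c.1 ∈ μ.cells then Fin.castSucc (T' ⟨c.1, h⟩) else Fin.last m

lemma bwdT_ssyt (hμl : μ ≤ l) (hs : IsStrip l μ) {T' : μ.cells → Fin m}
    (hT' : IsSSYT T') : IsSSYT (bwdT l μ m T') := by
  constructor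
  · rintro ⟨a, hal⟩ ⟨b, hbl⟩ hrow hcol
    unfold bwdT
    split_ifs with ha hb hb
    · exact Fin.castSucc_le_castSucc_iff.mpr (hT'.1 ⟨a, ha⟩ ⟨b, hb⟩ hrow hcol)
    · exact Fin.le_last _
    · -- a ∉ μ, b ∈ μ : impossible since μ lower set
      exact absurd (μ.up_left_mem (le_of_eq hrow) hcol hb) ha
    · exact le_rfl
  · rintro ⟨a, hal⟩ ⟨b, hbl⟩ hcol hrow
    unfold bwdT
    split_ifs with ha hb hb
    · exact Fin.castSucc_lt_castSucc_iff.mpr (hT'.2 ⟨a, ha⟩ ⟨b, hb⟩ hcol hrow)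
    · exact Fin.castSucc_lt_last _
    · exact absurd (μ.up_left_mem (le_of_lt hrow) (le_of_eq hcol) hb) ha
    · -- both outside μ, same column: contradicts the strip property
      exfalso
      have hb' : ((a.1 + 1, a.2) : ℕ × ℕ) ∈ l := by
        have : ((a.1 + 1, a.2) : ℕ × ℕ) ≤ (b.1, b.2) := ⟨hrow, le_of_eq hcol⟩
        exact l.up_left_mem this.1 this.2 (by exact hbl)
      exact hs a hal (by simpa [YoungDiagram.mem_cells] using ha) (by simpa using hb')

lemma gD_bwdT (hμl : μ ≤ l) {T' : μ.cells → Fin m} :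
    gD l m (bwdT l μ m T') = μ := by
  have hcells : innerCells l m (bwdT l μ m T') = μ.cells := by
    ext c
    rw [mem_innerCells]
    constructor
    · rintro ⟨h, hne⟩
      by_contra hc
      apply hne
      unfold bwdT
      rw [dif_neg hc]
    · intro hc
      refine ⟨cells_sub hμl hc, ?_⟩
      unfold bwdT
      rw [dif_pos hc]
      exact Fin.ne_last_of_lt (Fin.castSucc_lt_last _)
  unfold gD
  rw [hcells, dif_pos μ.isLowerSet]

lemma card_filter_mem (hμl : μ ≤ l) :
    (univ.filter (fun c : l.cells => c.1 ∈ μ.cells)).card = μ.cells.card := by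
  refine Finset.card_bij (fun c _ => c.1) ?_ ?_ ?_
  · intro a ha; exact (Finset.mem_filter.mp ha).2
  · intro a _ b _ h; exact Subtype.ext h
  · intro b hb
    exact ⟨⟨b, cells_sub hμl hb⟩, Finset.mem_filter.mpr ⟨Finset.mem_univ _, hb⟩, rfl⟩

lemma card_filter_not_mem (hμl : μ ≤ l) :
    (univ.filter (fun c : l.cells => ¬(c.1 ∈ μ.cells))).card = l.card - μ.card := by
  have h1 := Finset.card_filter_add_card_filter_not
    (s := (univ : Finset l.cells)) (fun c : l.cells => c.1 ∈ μ.cells)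
  have h2 : (univ : Finset l.cells).card = l.card := by
    rw [Finset.card_univ, Fintype.card_coe]
  have h3 := card_filter_mem hμl
  have h4 : μ.cells.card = μ.card := rfl
  omega

lemma bwdT_prod (hμl : μ ≤ l) (T' : μ.cells → Fin m) :
    (∏ c, X (bwdT l μ m T' c) : MvPolynomial (Fin (m + 1)) ℚ) =
      rename Fin.castSucc (∏ c, X (T' c)) * X (Fin.last m) ^ (l.card - μ.card) := by
  rw [map_prod]
  simp only [rename_X]
  rw [← Finset.prod_filter_mul_prod_filter_not (univ : Finset l.cells)
    (fun c => c.1 ∈ μ.cells) (fun c => X (bwdT l μ m T' c))]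
  congr 1
  · refine Finset.prod_bij' (fun c hc => (⟨c.1, (Finset.mem_filter.mp hc).2⟩ : μ.cells))
      (fun c _ => ⟨c.1, cells_sub hμl c.2⟩) ?_ ?_ ?_ ?_ ?_
    · intro a _; exact Finset.mem_univ _
    · intro a _; exact Finset.mem_filter.mpr ⟨Finset.mem_univ _, a.2⟩
    · intro a _; exact Subtype.ext rfl
    · intro a _; exact Subtype.ext rfl
    · intro a ha
      unfold bwdT
      rw [dif_pos (Finset.mem_filter.mp ha).2]
  · have hconst : ∀ c ∈ univ.filter (fun c : l.cells => ¬(c.1 ∈ μ.cells)),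
        X (bwdT l μ m T' c) = (X (Fin.last m) : MvPolynomial (Fin (m + 1)) ℚ) := by
      intro c hc
      simp only [bwdT, dif_neg (Finset.mem_filter.mp hc).2]
    rw [Finset.prod_congr rfl hconst, Finset.prod_const, card_filter_not_mem hμl]

theorem schur_branch (l : YoungDiagram) (m : ℕ) :
    schur l (m + 1) = ∑ μ ∈ subdiags l, if IsStrip l μ then
      rename Fin.castSucc (schur μ m) * X (Fin.last m) ^ (l.card - μ.card) else 0 := by
  rw [schur_eq]
  rw [← Finset.sum_fiberwise_of_maps_to (g := gD l m) (t := subdiags l)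
    (fun T _ => mem_subdiags.mpr (gD_le T))]
  refine Finset.sum_congr rfl fun μ hμ => ?_
  have hμl : μ ≤ l := mem_subdiags.mp hμ
  rw [← Finset.sum_filter, Finset.filter_filter]
  by_cases hs : IsStrip l μ
  · rw [if_pos hs]
    rw [schur_eq, map_sum, Finset.sum_mul]
    have : ∀ T' : μ.cells → Fin m,
        (rename Fin.castSucc (if IsSSYT T' then ∏ c, X (T' c) else 0) : MvPolynomial (Fin (m+1)) ℚ)
          * X (Fin.last m) ^ (l.card - μ.card)
        = if IsSSYT T' then rename Fin.castSucc (∏ c, X (T' c))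
            * X (Fin.last m) ^ (l.card - μ.card) else 0 := by
      intro T'
      split_ifs with h
      · rfl
      · simp
    rw [Finset.sum_congr rfl (fun T' _ => this T'), ← Finset.sum_filter]
    refine Finset.sum_bij'
      (fun T hT => fun c : μ.cells => Fin.castPred (T ⟨c.1, cells_sub hμl c.2⟩)
        (fiber_ne_last (Finset.mem_filter.mp hT).2.2 (Finset.mem_filter.mp hT).2.1 c.2
          (cells_sub hμl c.2)))
      (fun T' _ => bwdT l μ m T') ?_ ?_ ?_ ?_ ?_
    · -- maps to SSYT
      intro T hT
      obtain ⟨-, hg, hssyt⟩ := Finset.mem_filter.mp hT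
      refine Finset.mem_filter.mpr ⟨Finset.mem_univ _, ?_, ?_⟩
      · rintro a b hrow hcol
        rw [Fin.le_def]
        simp only [Fin.coe_castPred]
        exact hssyt.1 _ _ hrow hcol
      · rintro a b hcol hrow
        rw [Fin.lt_def]
        simp only [Fin.coe_castPred]
        exact hssyt.2 _ _ hcol hrow
    · -- maps back into the fiber
      intro T' hT'
      refine Finset.mem_filter.mpr ⟨Finset.mem_univ _, gD_bwdT hμl, ?_⟩
      exact bwdT_ssyt hμl hs (Finset.mem_filter.mp hT').2
    · -- left inverse
      intro T hT
      obtain ⟨-, hg, hssyt⟩ := Finset.mem_filter.mp hT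
      funext c
      simp only [bwdT]
      split_ifs with h
      · exact Fin.castSucc_castPred _ _
      · exact (fiber_last hssyt hg h c.2).symm
    · -- right inverse
      intro T' hT'
      funext c
      have hc : c.1 ∈ μ.cells := c.2
      simp only [bwdT, dif_pos hc]
      rw [Fin.castPred_castSucc]
    · -- values
      intro T hT
      obtain ⟨-, hg, hssyt⟩ := Finset.mem_filter.mp hT
      have hb : bwdT l μ m (fun c : μ.cells => Fin.castPred (T ⟨c.1, cells_sub hμl c.2⟩)
          (fiber_ne_last hssyt hg c.2 (cells_sub hμl c.2))) = T := by
        funext c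
        simp only [bwdT]
        split_ifs with h
        · exact Fin.castSucc_castPred _ _
        · exact (fiber_last hssyt hg h c.2).symm
      rw [← bwdT_prod hμl, hb]
  · rw [if_neg hs]
    refine Finset.sum_eq_zero fun T hT => ?_
    obtain ⟨-, hg, hssyt⟩ := Finset.mem_filter.mp hT
    exact absurd (hg ▸ gD_strip hssyt) hs


section Dagger

variable {l ρ : YoungDiagram}

lemma rowLen_mono (h : ρ ≤ l) (i : ℕ) : ρ.rowLen i ≤ l.rowLen i := by
  by_contra hlt
  push_neg at hlt
  have h1 : (i, l.rowLen i) ∈ ρ := YoungDiagram.mem_iff_lt_rowLen.mpr hlt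
  have h2 : (i, l.rowLen i) ∈ l := h h1
  simp [YoungDiagram.mem_iff_lt_rowLen] at h2

lemma strip_interlace (hs : IsStrip l ρ) (i : ℕ) :
    l.rowLen (i + 1) ≤ ρ.rowLen i := by
  by_contra hlt
  push_neg at hlt
  have hmem : ((i, ρ.rowLen i) : ℕ × ℕ) ∈ l := by
    rw [YoungDiagram.mem_iff_lt_rowLen]
    exact lt_of_lt_of_le hlt (l.rowLen_anti i (i + 1) (Nat.le_succ i))
  have hnot : ((i, ρ.rowLen i) : ℕ × ℕ) ∉ ρ := by
    rw [YoungDiagram.mem_iff_lt_rowLen]; omega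
  have hbelow : ((i + 1, ρ.rowLen i) : ℕ × ℕ) ∈ l :=
    YoungDiagram.mem_iff_lt_rowLen.mpr hlt
  exact hs _ hmem hnot hbelow

/-- the difference of diagrams, row by row -/
lemma sdiff_rows (hρl : ρ ≤ l) :
    l.cells \ ρ.cells = (Finset.range (l.colLen 0)).biUnion
      (fun i => {i} ×ˢ Finset.Ico (ρ.rowLen i) (l.rowLen i)) := by
  ext ⟨a, b⟩
  simp only [Finset.mem_sdiff, Finset.mem_biUnion, Finset.mem_range, Finset.mem_product,
    Finset.mem_singleton, Finset.mem_Ico, YoungDiagram.mem_cells]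
  rw [YoungDiagram.mem_iff_lt_rowLen, YoungDiagram.mem_iff_lt_rowLen]
  constructor
  · rintro ⟨h1, h2⟩
    refine ⟨a, ?_, rfl, by omega⟩
    rw [← YoungDiagram.mem_iff_lt_colLen]
    exact l.up_left_mem le_rfl (Nat.zero_le _) (YoungDiagram.mem_iff_lt_rowLen.mpr h1)
  · rintro ⟨i, hi, rfl, h3, h4⟩
    omega

lemma card_sdiff_rows (hρl : ρ ≤ l) :
    (l.cells \ ρ.cells).card =
      ∑ i ∈ Finset.range (l.colLen 0), (l.rowLen i - ρ.rowLen i) := by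
  rw [sdiff_rows hρl, Finset.card_biUnion]
  · refine Finset.sum_congr rfl fun i _ => ?_
    rw [Finset.card_product, Finset.card_singleton, Nat.card_Ico, one_mul]
  · intro i _ j _ hij
    simp only [Finset.disjoint_left]
    rintro ⟨a, b⟩ h1 h2
    simp only [Finset.mem_product, Finset.mem_singleton] at h1 h2
    exact hij (h1.1.symm.trans h2.1)

lemma diff_singleton {μ : YoungDiagram} (hρμ : ρ ≤ μ) (hcard : ρ.card + 1 = μ.card) :
    ∃ b, μ.cells \ ρ.cells = {b} := by
  rw [← Finset.card_eq_one, Finset.card_sdiff_of_subset (YoungDiagram.cells_subset_iff.mpr hρμ)]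
  show μ.cells.card - ρ.cells.card = 1
  have h1 : ρ.cells.card = ρ.card := rfl
  have h2 : μ.cells.card = μ.card := rfl
  omega

lemma unique_cell_form {μ : YoungDiagram} (hρμ : ρ ≤ μ) {b : ℕ × ℕ}
    (hb : μ.cells \ ρ.cells = {b}) :
    b.2 = ρ.rowLen b.1 ∧ μ.cells = insert b ρ.cells := by
  have hbmem : b ∈ μ.cells \ ρ.cells := by rw [hb]; exact Finset.mem_singleton_self b
  rw [Finset.mem_sdiff] at hbmem
  obtain ⟨hbμ, hbρ⟩ := hbmem
  have hge : ρ.rowLen b.1 ≤ b.2 := by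
    by_contra h
    push_neg at h
    exact hbρ ((YoungDiagram.mem_cells _).mpr (YoungDiagram.mem_iff_lt_rowLen.mpr (by
      cases b; exact h)))
  constructor
  · by_contra hne
    have hgt : ρ.rowLen b.1 < b.2 := lt_of_le_of_ne hge (fun h => hne h.symm)
    have hmem : ((b.1, ρ.rowLen b.1) : ℕ × ℕ) ∈ μ :=
      μ.up_left_mem le_rfl (le_of_lt hgt) (by cases b; exact (YoungDiagram.mem_cells _).mp hbμ)
    have hnot : ((b.1, ρ.rowLen b.1) : ℕ × ℕ) ∉ ρ := by
      rw [YoungDiagram.mem_iff_lt_rowLen]; omega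
    have : ((b.1, ρ.rowLen b.1) : ℕ × ℕ) ∈ μ.cells \ ρ.cells :=
      Finset.mem_sdiff.mpr ⟨(YoungDiagram.mem_cells _).mpr hmem, fun hc => hnot hc⟩
    rw [hb, Finset.mem_singleton] at this
    have := congrArg Prod.snd this
    simp only at this
    omega
  · ext c
    rw [Finset.mem_insert]
    constructor
    · intro hc
      by_cases hcρ : c ∈ ρ.cells
      · exact Or.inr hcρ
      · left
        have : c ∈ μ.cells \ ρ.cells := Finset.mem_sdiff.mpr ⟨hc, hcρ⟩
        rw [hb, Finset.mem_singleton] at this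
        exact this
    · rintro (rfl | hc)
      · exact hbμ
      · exact cells_sub hρμ hc


lemma mem_rowLen' {μ : YoungDiagram} {c : ℕ × ℕ} : c ∈ μ ↔ c.2 < μ.rowLen c.1 := by
  obtain ⟨a, b⟩ := c
  exact YoungDiagram.mem_iff_lt_rowLen

noncomputable def theCell (s : Finset (ℕ × ℕ)) : ℕ × ℕ :=
  if h : ∃ b, s = {b} then h.choose else (0, 0)

lemma theCell_spec {s : Finset (ℕ × ℕ)} (h : ∃ b, s = {b}) : s = {theCell s} := by
  unfold theCell
  rw [dif_pos h]
  exact h.choose_spec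

lemma insert_sdiff_self' {a : ℕ × ℕ} {s : Finset (ℕ × ℕ)} (h : a ∉ s) :
    insert a s \ s = {a} := by
  ext c
  simp only [Finset.mem_sdiff, Finset.mem_insert, Finset.mem_singleton]
  constructor
  · rintro ⟨h1 | h1, h2⟩
    · exact h1
    · exact absurd h1 h2
  · rintro rfl
    exact ⟨Or.inl rfl, h⟩

lemma sdiff_erase_self' {a : ℕ × ℕ} {s : Finset (ℕ × ℕ)} (h : a ∈ s) :
    s \ s.erase a = {a} := by
  ext c
  simp only [Finset.mem_sdiff, Finset.mem_erase, Finset.mem_singleton]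
  constructor
  · rintro ⟨h1, h2⟩
    by_contra hne
    exact h2 ⟨hne, h1⟩
  · rintro rfl
    exact ⟨h, fun hc => hc.1 rfl⟩

lemma unique_corner_form {ν : YoungDiagram} (hνl : ν ≤ l) {b : ℕ × ℕ}
    (hb : l.cells \ ν.cells = {b}) :
    b.2 = l.rowLen b.1 - 1 ∧ ν.cells = l.cells.erase b := by
  have hbmem : b ∈ l.cells \ ν.cells := by rw [hb]; exact Finset.mem_singleton_self b
  rw [Finset.mem_sdiff] at hbmem
  obtain ⟨hbl, hbν⟩ := hbmem
  have hblt : b.2 < l.rowLen b.1 := by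
    rw [← YoungDiagram.mem_iff_lt_rowLen]
    cases b; exact (YoungDiagram.mem_cells _).mp hbl
  constructor
  · by_contra hne
    have hlt : b.2 < l.rowLen b.1 - 1 := by omega
    have hcl : ((b.1, l.rowLen b.1 - 1) : ℕ × ℕ) ∈ l.cells := by
      rw [YoungDiagram.mem_cells, YoungDiagram.mem_iff_lt_rowLen]; omega
    have hcν : ((b.1, l.rowLen b.1 - 1) : ℕ × ℕ) ∈ ν.cells := by
      by_contra hc
      have : ((b.1, l.rowLen b.1 - 1) : ℕ × ℕ) ∈ l.cells \ ν.cells :=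
        Finset.mem_sdiff.mpr ⟨hcl, hc⟩
      rw [hb, Finset.mem_singleton] at this
      have := congrArg Prod.snd this
      simp only at this
      omega
    have : b ∈ ν := ν.up_left_mem le_rfl (by omega : b.2 ≤ l.rowLen b.1 - 1)
      (by exact (YoungDiagram.mem_cells _).mp hcν)
    exact hbν this
  · ext c
    rw [Finset.mem_erase]
    constructor
    · intro hc
      refine ⟨?_, cells_sub hνl hc⟩
      rintro rfl
      exact hbν hc
    · rintro ⟨hne, hc⟩
      by_contra hcν
      have : c ∈ l.cells \ ν.cells := Finset.mem_sdiff.mpr ⟨hc, hcν⟩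
      rw [hb, Finset.mem_singleton] at this
      exact hne this

section StripCase

lemma addable_lower (hs : IsStrip l ρ) {i : ℕ} (hi : ρ.rowLen i < l.rowLen i) :
    IsLowerSet (↑(insert ((i, ρ.rowLen i) : ℕ × ℕ) ρ.cells) : Set (ℕ × ℕ)) := by
  rintro ⟨a1, a2⟩ ⟨b1, b2⟩ ⟨h1, h2⟩ hmem
  simp only [Finset.coe_insert, Set.mem_insert_iff, Finset.mem_coe] at hmem ⊢
  simp only at h1 h2
  rcases hmem with heq | hmem
  · have ha1 : a1 = i := congrArg Prod.fst heq
    have ha2 : a2 = ρ.rowLen i := congrArg Prod.snd heq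
    rcases Nat.lt_or_ge b1 i with hb1 | hb1
    · right
      rw [YoungDiagram.mem_cells, YoungDiagram.mem_iff_lt_rowLen]
      have hint : l.rowLen i ≤ ρ.rowLen (i - 1) := by
        have h := strip_interlace hs (i - 1)
        rwa [Nat.sub_add_cancel (by omega : 1 ≤ i)] at h
      have hanti : ρ.rowLen (i - 1) ≤ ρ.rowLen b1 := ρ.rowLen_anti b1 (i - 1) (by omega)
      omega
    · have hb1' : b1 = i := by omega
      rcases Nat.lt_or_ge b2 (ρ.rowLen i) with hb2 | hb2
      · right
        rw [YoungDiagram.mem_cells, YoungDiagram.mem_iff_lt_rowLen, hb1']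
        exact hb2
      · left
        have hb2' : b2 = ρ.rowLen i := by omega
        rw [hb1', hb2']
  · right
    exact ρ.isLowerSet (show ((b1, b2) : ℕ × ℕ) ≤ (a1, a2) from ⟨h1, h2⟩) hmem

lemma corner_lower (hs : IsStrip l ρ) {i : ℕ} (hi : ρ.rowLen i < l.rowLen i) :
    IsLowerSet (↑(l.cells.erase ((i, l.rowLen i - 1) : ℕ × ℕ)) : Set (ℕ × ℕ)) := by
  have hmem : ((i, l.rowLen i - 1) : ℕ × ℕ) ∈ l := by
    rw [YoungDiagram.mem_iff_lt_rowLen]; omega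
  have hnotbelow : ((i + 1, l.rowLen i - 1) : ℕ × ℕ) ∉ l := by
    rw [YoungDiagram.mem_iff_lt_rowLen]
    have h1 := strip_interlace hs i
    push_neg
    omega
  have hnotright : ((i, l.rowLen i) : ℕ × ℕ) ∉ l := by
    rw [YoungDiagram.mem_iff_lt_rowLen]; omega
  rintro ⟨a1, a2⟩ ⟨b1, b2⟩ ⟨h1, h2⟩ hmem2
  simp only [Finset.coe_erase, Set.mem_diff, Finset.mem_coe, Set.mem_singleton_iff] at hmem2 ⊢
  simp only at h1 h2
  obtain ⟨hal, hane⟩ := hmem2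
  constructor
  · exact l.up_left_mem h1 h2 ((YoungDiagram.mem_cells _).mp hal)
  · intro heqb
    have hb1 : b1 = i := congrArg Prod.fst heqb
    have hb2 : b2 = l.rowLen i - 1 := congrArg Prod.snd heqb
    rcases Nat.lt_or_ge (l.rowLen i - 1) a2 with hgt | hle
    · exact hnotright (l.up_left_mem (by omega) (by omega)
        ((YoungDiagram.mem_cells _).mp hal))
    · have ha1 : i < a1 := by
        rcases Nat.lt_or_ge i a1 with h | h
        · exact h
        · exfalso
          exact hane (by rw [Prod.mk.injEq]; omega)
      exact hnotbelow (l.up_left_mem (by omega) (by omega)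
        ((YoungDiagram.mem_cells _).mp hal))

lemma sumL_strip (hρl : ρ ≤ l) (hs : IsStrip l ρ) (m : ℕ) :
    (∑ μ ∈ subdiags l, if IsStrip l μ ∧ ρ ≤ μ ∧ ρ.card + 1 = μ.card
        then w m (μ.cells \ ρ.cells) else 0)
    = ∑ i ∈ (Finset.range (l.colLen 0)).filter (fun i => ρ.rowLen i < l.rowLen i),
        ((m : ℚ) - i + ρ.rowLen i) := by
  rw [← Finset.sum_filter]
  refine Finset.sum_bij'
    (fun μ hμ => (theCell (μ.cells \ ρ.cells)).1)
    (fun i hi => (⟨insert ((i, ρ.rowLen i) : ℕ × ℕ) ρ.cells,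
      addable_lower hs (Finset.mem_filter.mp hi).2⟩ : YoungDiagram))
    ?_ ?_ ?_ ?_ ?_
  · -- maps to rows
    intro μ hμ
    obtain ⟨hμS, hstrip, hρμ, hcard⟩ := Finset.mem_filter.mp hμ
    have hspec := theCell_spec (diff_singleton hρμ hcard)
    set b := theCell (μ.cells \ ρ.cells) with hbdef
    have hbmem : b ∈ μ.cells \ ρ.cells := by rw [hspec]; exact Finset.mem_singleton_self b
    rw [Finset.mem_sdiff] at hbmem
    have hform := unique_cell_form hρμ hspec
    have hbl : b ∈ l := mem_subdiags.mp hμS ((YoungDiagram.mem_cells _).mp hbmem.1)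
    have hblt : b.2 < l.rowLen b.1 := mem_rowLen'.mp hbl
    show b.1 ∈ (Finset.range (l.colLen 0)).filter (fun i => ρ.rowLen i < l.rowLen i)
    refine Finset.mem_filter.mpr ⟨Finset.mem_range.mpr ?_, by omega⟩
    rw [← YoungDiagram.mem_iff_lt_colLen]
    exact l.up_left_mem le_rfl (Nat.zero_le _) (by rwa [Prod.mk.eta])
  · -- maps to diagrams
    intro i hi
    obtain ⟨hir, hilt⟩ := Finset.mem_filter.mp hi
    have hnotρ : ((i, ρ.rowLen i) : ℕ × ℕ) ∉ ρ.cells := by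
      rw [YoungDiagram.mem_cells, YoungDiagram.mem_iff_lt_rowLen]; omega
    refine Finset.mem_filter.mpr ⟨mem_subdiags.mpr ?_, ?_, ?_, ?_⟩
    · rw [← YoungDiagram.cells_subset_iff]
      intro c hc
      rcases Finset.mem_insert.mp hc with rfl | hc
      · rw [YoungDiagram.mem_cells, YoungDiagram.mem_iff_lt_rowLen]; exact hilt
      · exact cells_sub hρl hc
    · intro c hcl hcμ
      refine hs c hcl ?_
      intro hcρ
      exact hcμ (Finset.mem_insert.mpr (Or.inr hcρ))
    · rw [← YoungDiagram.cells_subset_iff]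
      exact Finset.subset_insert _ _
    · show ρ.card + 1 = (insert _ ρ.cells).card
      rw [Finset.card_insert_of_notMem hnotρ]
  · -- left inverse
    intro μ hμ
    obtain ⟨hμS, hstrip, hρμ, hcard⟩ := Finset.mem_filter.mp hμ
    have hspec := theCell_spec (diff_singleton hρμ hcard)
    have hform := unique_cell_form hρμ hspec
    apply YoungDiagram.ext
    show insert ((theCell (μ.cells \ ρ.cells)).1,
      ρ.rowLen (theCell (μ.cells \ ρ.cells)).1) ρ.cells = μ.cells
    conv_rhs => rw [hform.2]
    rw [← hform.1, Prod.mk.eta]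
  · -- right inverse
    intro i hi
    obtain ⟨hir, hilt⟩ := Finset.mem_filter.mp hi
    have hnotρ : ((i, ρ.rowLen i) : ℕ × ℕ) ∉ ρ.cells := by
      rw [YoungDiagram.mem_cells, YoungDiagram.mem_iff_lt_rowLen]; omega
    show (theCell (insert ((i, ρ.rowLen i) : ℕ × ℕ) ρ.cells \ ρ.cells)).1 = i
    have h2 : theCell (insert ((i, ρ.rowLen i) : ℕ × ℕ) ρ.cells \ ρ.cells)
        = ((i, ρ.rowLen i) : ℕ × ℕ) :=
      Finset.singleton_injective
        ((theCell_spec ⟨_, insert_sdiff_self' hnotρ⟩).symm.trans (insert_sdiff_self' hnotρ))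
    rw [h2]
  · -- values
    intro μ hμ
    obtain ⟨hμS, hstrip, hρμ, hcard⟩ := Finset.mem_filter.mp hμ
    have hspec := theCell_spec (diff_singleton hρμ hcard)
    have hform := unique_cell_form hρμ hspec
    unfold w
    rw [hspec, Finset.sum_singleton, hform.1, ← hspec]

lemma sumR_strip (hρl : ρ ≤ l) (hs : IsStrip l ρ) (m : ℕ) :
    (∑ ν ∈ subdiags l, if ν.card + 1 = l.card ∧ ρ ≤ ν ∧ IsStrip ν ρ
        then w (m + 1) (l.cells \ ν.cells) else 0)
    = ∑ i ∈ (Finset.range (l.colLen 0)).filter (fun i => ρ.rowLen i < l.rowLen i),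
        ((m : ℚ) - i + l.rowLen i) := by
  rw [← Finset.sum_filter]
  refine Finset.sum_bij'
    (fun ν hν => (theCell (l.cells \ ν.cells)).1)
    (fun i hi => (⟨l.cells.erase ((i, l.rowLen i - 1) : ℕ × ℕ),
      corner_lower hs (Finset.mem_filter.mp hi).2⟩ : YoungDiagram))
    ?_ ?_ ?_ ?_ ?_
  · -- maps to rows
    intro ν hν
    obtain ⟨hνS, hcard, hρν, hstrip⟩ := Finset.mem_filter.mp hν
    have hνl := mem_subdiags.mp hνS
    have hspec := theCell_spec (diff_singleton hνl hcard)
    set b := theCell (l.cells \ ν.cells) with hbdef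
    have hbmem : b ∈ l.cells \ ν.cells := by rw [hspec]; exact Finset.mem_singleton_self b
    rw [Finset.mem_sdiff] at hbmem
    have hblt : b.2 < l.rowLen b.1 := mem_rowLen'.mp ((YoungDiagram.mem_cells _).mp hbmem.1)
    have hbρ : b ∉ ρ.cells := fun hc =>
      hbmem.2 (YoungDiagram.cells_subset_iff.mpr hρν hc)
    have hbρlen : ρ.rowLen b.1 ≤ b.2 := by
      by_contra h
      push_neg at h
      exact hbρ ((YoungDiagram.mem_cells _).mpr (mem_rowLen'.mpr h))
    show b.1 ∈ (Finset.range (l.colLen 0)).filter (fun i => ρ.rowLen i < l.rowLen i)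
    refine Finset.mem_filter.mpr ⟨Finset.mem_range.mpr ?_, by omega⟩
    rw [← YoungDiagram.mem_iff_lt_colLen]
    refine l.up_left_mem le_rfl (Nat.zero_le _) (by
      rw [Prod.mk.eta]
      exact (YoungDiagram.mem_cells _).mp hbmem.1)
  · -- maps to diagrams
    intro i hi
    obtain ⟨hir, hilt⟩ := Finset.mem_filter.mp hi
    have hcmem : ((i, l.rowLen i - 1) : ℕ × ℕ) ∈ l.cells := by
      rw [YoungDiagram.mem_cells, YoungDiagram.mem_iff_lt_rowLen]; omega
    have hcnotρ : ((i, l.rowLen i - 1) : ℕ × ℕ) ∉ ρ.cells := by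
      rw [YoungDiagram.mem_cells, YoungDiagram.mem_iff_lt_rowLen]; omega
    refine Finset.mem_filter.mpr ⟨mem_subdiags.mpr ?_, ?_, ?_, ?_⟩
    · rw [← YoungDiagram.cells_subset_iff]
      exact Finset.erase_subset _ _
    · show (l.cells.erase _).card + 1 = l.card
      rw [Finset.card_erase_of_mem hcmem]
      have h1 : 1 ≤ l.cells.card := Finset.card_pos.mpr ⟨_, hcmem⟩
      show l.cells.card - 1 + 1 = l.cells.card
      omega
    · rw [← YoungDiagram.cells_subset_iff]
      intro c hc
      refine Finset.mem_erase.mpr ⟨?_, cells_sub hρl hc⟩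
      rintro rfl
      exact hcnotρ hc
    · intro c hcν hcρ hbelow
      have hcν' : c ∈ l.cells.erase ((i, l.rowLen i - 1) : ℕ × ℕ) := hcν
      have hbelow' : ((c.1 + 1, c.2) : ℕ × ℕ) ∈ l.cells.erase ((i, l.rowLen i - 1) : ℕ × ℕ) :=
        hbelow
      exact hs c ((YoungDiagram.mem_cells _).mp (Finset.mem_of_mem_erase hcν')) hcρ
        ((YoungDiagram.mem_cells _).mp (Finset.mem_of_mem_erase hbelow'))
  · -- left inverse
    intro ν hν
    obtain ⟨hνS, hcard, hρν, hstrip⟩ := Finset.mem_filter.mp hν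
    have hνl := mem_subdiags.mp hνS
    have hspec := theCell_spec (diff_singleton hνl hcard)
    have hform := unique_corner_form hνl hspec
    apply YoungDiagram.ext
    show l.cells.erase ((theCell (l.cells \ ν.cells)).1,
      l.rowLen (theCell (l.cells \ ν.cells)).1 - 1) = ν.cells
    conv_rhs => rw [hform.2]
    rw [← hform.1, Prod.mk.eta]
  · -- right inverse
    intro i hi
    obtain ⟨hir, hilt⟩ := Finset.mem_filter.mp hi
    have hcmem : ((i, l.rowLen i - 1) : ℕ × ℕ) ∈ l.cells := by
      rw [YoungDiagram.mem_cells, YoungDiagram.mem_iff_lt_rowLen]; omega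
    show (theCell (l.cells \ l.cells.erase ((i, l.rowLen i - 1) : ℕ × ℕ))).1 = i
    have h2 : theCell (l.cells \ l.cells.erase ((i, l.rowLen i - 1) : ℕ × ℕ))
        = ((i, l.rowLen i - 1) : ℕ × ℕ) :=
      Finset.singleton_injective
        ((theCell_spec ⟨_, sdiff_erase_self' hcmem⟩).symm.trans (sdiff_erase_self' hcmem))
    rw [h2]
  · -- values
    intro ν hν
    obtain ⟨hνS, hcard, hρν, hstrip⟩ := Finset.mem_filter.mp hν
    have hνl := mem_subdiags.mp hνS
    have hspec := theCell_spec (diff_singleton hνl hcard)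
    set b := theCell (l.cells \ ν.cells) with hbdef
    have hbmem : b ∈ l.cells \ ν.cells := by rw [hspec]; exact Finset.mem_singleton_self b
    rw [Finset.mem_sdiff] at hbmem
    have hform := unique_corner_form hνl hspec
    have hblt : b.2 < l.rowLen b.1 := mem_rowLen'.mp ((YoungDiagram.mem_cells _).mp hbmem.1)
    unfold w
    rw [hspec, Finset.sum_singleton, hform.1]
    have h1 : 1 ≤ l.rowLen b.1 := by omega
    push_cast [Nat.cast_sub h1]
    ring

end StripCase

section SingleCase

variable {v : ℕ × ℕ}

lemma below_not_ρ (hvρ : v ∉ ρ) : ((v.1 + 1, v.2) : ℕ × ℕ) ∉ ρ := by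
  intro h
  have h2 : ((v.1, v.2) : ℕ × ℕ) ∈ ρ := ρ.up_left_mem (Nat.le_succ _) le_rfl h
  rw [Prod.mk.eta] at h2
  exact hvρ h2

lemma no_two_below (hvl : v ∈ l) (hvρ : v ∉ ρ) (hvb : ((v.1 + 1, v.2) : ℕ × ℕ) ∈ l)
    (huniq : ∀ c : ℕ × ℕ, c ∈ l → c ∉ ρ → ((c.1 + 1, c.2) : ℕ × ℕ) ∈ l → c = v) :
    ((v.1 + 2, v.2) : ℕ × ℕ) ∉ l := by
  intro h
  have := huniq (v.1 + 1, v.2) hvb (below_not_ρ hvρ) (by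
    show ((v.1 + 1 + 1, v.2) : ℕ × ℕ) ∈ l
    have : v.1 + 1 + 1 = v.1 + 2 := by omega
    rw [this]; exact h)
  have h1 := congrArg Prod.fst this
  simp only at h1
  omega

lemma no_right_below (hvl : v ∈ l) (hvρ : v ∉ ρ) (hvb : ((v.1 + 1, v.2) : ℕ × ℕ) ∈ l)
    (huniq : ∀ c : ℕ × ℕ, c ∈ l → c ∉ ρ → ((c.1 + 1, c.2) : ℕ × ℕ) ∈ l → c = v) :
    ((v.1 + 1, v.2 + 1) : ℕ × ℕ) ∉ l := by
  intro h
  have hc : ((v.1, v.2 + 1) : ℕ × ℕ) ∈ l := l.up_left_mem (Nat.le_succ _) le_rfl h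
  have hcρ : ((v.1, v.2 + 1) : ℕ × ℕ) ∉ ρ := by
    intro hh
    have h2 : ((v.1, v.2) : ℕ × ℕ) ∈ ρ := ρ.up_left_mem le_rfl (Nat.le_succ _) hh
    rw [Prod.mk.eta] at h2
    exact hvρ h2
  have := huniq (v.1, v.2 + 1) hc hcρ h
  have h1 := congrArg Prod.snd this
  simp only at h1
  omega

lemma vIns_lower (hvl : v ∈ l) (hvρ : v ∉ ρ)
    (huniq : ∀ c : ℕ × ℕ, c ∈ l → c ∉ ρ → ((c.1 + 1, c.2) : ℕ × ℕ) ∈ l → c = v)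
    (hvb : ((v.1 + 1, v.2) : ℕ × ℕ) ∈ l) (hρl : ρ ≤ l) :
    IsLowerSet (↑(insert v ρ.cells) : Set (ℕ × ℕ)) := by
  rintro ⟨a1, a2⟩ ⟨b1, b2⟩ ⟨h1, h2⟩ hmem
  simp only [Finset.coe_insert, Set.mem_insert_iff, Finset.mem_coe] at hmem ⊢
  simp only at h1 h2
  rcases hmem with heq | hmem
  · -- a = v
    by_cases hbρ : ((b1, b2) : ℕ × ℕ) ∈ ρ.cells
    · exact Or.inr hbρ
    · left
      have hA1 : a1 = v.1 := congrArg Prod.fst heq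
      have hA2 : a2 = v.2 := congrArg Prod.snd heq
      have hble : ((b1, b2) : ℕ × ℕ) ≤ v := by
        constructor <;> simp only <;> omega
      have hbl : ((b1, b2) : ℕ × ℕ) ∈ l := l.isLowerSet hble hvl
      have hvb' : ((v.1 + 1, v.2) : ℕ × ℕ) ∈ l.cells := (YoungDiagram.mem_cells _).mpr hvb
      have hbelow : ((b1 + 1, b2) : ℕ × ℕ) ∈ l :=
        l.up_left_mem (show b1 + 1 ≤ v.1 + 1 by omega) (show b2 ≤ v.2 by omega) hvb'
      exact huniq _ hbl (fun hh => hbρ hh) hbelow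
  · right
    exact ρ.isLowerSet (show ((b1, b2) : ℕ × ℕ) ≤ (a1, a2) from ⟨h1, h2⟩) hmem

lemma vErase_lower (hvl : v ∈ l) (hvρ : v ∉ ρ) (hvb : ((v.1 + 1, v.2) : ℕ × ℕ) ∈ l)
    (huniq : ∀ c : ℕ × ℕ, c ∈ l → c ∉ ρ → ((c.1 + 1, c.2) : ℕ × ℕ) ∈ l → c = v) :
    IsLowerSet (↑(l.cells.erase ((v.1 + 1, v.2) : ℕ × ℕ)) : Set (ℕ × ℕ)) := by
  have hκ1 := no_two_below hvl hvρ hvb huniq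
  have hκ2 := no_right_below hvl hvρ hvb huniq
  rintro ⟨a1, a2⟩ ⟨b1, b2⟩ ⟨h1, h2⟩ hmem2
  simp only [Finset.coe_erase, Set.mem_diff, Finset.mem_coe, Set.mem_singleton_iff] at hmem2 ⊢
  simp only at h1 h2
  obtain ⟨hal, hane⟩ := hmem2
  constructor
  · exact l.up_left_mem h1 h2 ((YoungDiagram.mem_cells _).mp hal)
  · intro heqb
    have hb1 : b1 = v.1 + 1 := congrArg Prod.fst heqb
    have hb2 : b2 = v.2 := congrArg Prod.snd heqb
    rcases Nat.lt_or_ge v.2 a2 with hgt | hle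
    · exact hκ2 (l.up_left_mem (by omega) (by omega) ((YoungDiagram.mem_cells _).mp hal))
    · have ha2 : a2 = v.2 := by omega
      have ha1 : v.1 + 1 < a1 := by
        rcases Nat.lt_or_ge (v.1 + 1) a1 with h | h
        · exact h
        · exfalso
          exact hane (by rw [Prod.mk.injEq]; omega)
      exact hκ1 (l.up_left_mem (by omega) (by omega) ((YoungDiagram.mem_cells _).mp hal))

lemma sumL_single (hρl : ρ ≤ l) (hvl : v ∈ l) (hvρ : v ∉ ρ)
    (hvb : ((v.1 + 1, v.2) : ℕ × ℕ) ∈ l)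
    (huniq : ∀ c : ℕ × ℕ, c ∈ l → c ∉ ρ → ((c.1 + 1, c.2) : ℕ × ℕ) ∈ l → c = v) (m : ℕ) :
    (∑ μ ∈ subdiags l, if IsStrip l μ ∧ ρ ≤ μ ∧ ρ.card + 1 = μ.card
        then w m (μ.cells \ ρ.cells) else 0) = (m : ℚ) - v.1 + v.2 := by
  set μ₀ : YoungDiagram := ⟨insert v ρ.cells, vIns_lower hvl hvρ huniq hvb hρl⟩ with hμ₀
  have hvρc : v ∉ ρ.cells := fun h => hvρ ((YoungDiagram.mem_cells _).mp h)
  have hmem : μ₀ ∈ subdiags l := by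
    rw [mem_subdiags, ← YoungDiagram.cells_subset_iff]
    intro c hc
    rcases Finset.mem_insert.mp hc with rfl | hc
    · exact (YoungDiagram.mem_cells _).mpr hvl
    · exact cells_sub hρl hc
  rw [Finset.sum_eq_single_of_mem μ₀ hmem ?_]
  · rw [if_pos ?_]
    · show w m (insert v ρ.cells \ ρ.cells) = _
      rw [insert_sdiff_self' hvρc]
      unfold w
      rw [Finset.sum_singleton]
    · refine ⟨?_, ?_, ?_⟩
      · intro c hcl hcμ hbelow
        have hcρ : c ∉ ρ := fun h =>
          hcμ (Finset.mem_insert.mpr (Or.inr ((YoungDiagram.mem_cells _).mpr h)))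
        have := huniq c hcl hcρ hbelow
        subst this
        exact hcμ (Finset.mem_insert_self _ _)
      · rw [← YoungDiagram.cells_subset_iff]
        exact Finset.subset_insert _ _
      · show ρ.card + 1 = (insert v ρ.cells).card
        rw [Finset.card_insert_of_notMem hvρc]
  · intro μ hμS hne
    split_ifs with hP
    · exfalso
      obtain ⟨hstrip, hρμ, hcard⟩ := hP
      have hspec := theCell_spec (diff_singleton hρμ hcard)
      have hvμ : v ∈ μ := by
        by_contra hvμ
        exact hstrip v hvl hvμ hvb
      have hvd : v ∈ μ.cells \ ρ.cells :=
        Finset.mem_sdiff.mpr ⟨(YoungDiagram.mem_cells _).mpr hvμ, hvρc⟩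
      rw [hspec, Finset.mem_singleton] at hvd
      have hform := unique_cell_form hρμ hspec
      apply hne
      apply YoungDiagram.ext
      rw [hform.2, ← hvd]
    · rfl

lemma sumR_single (hρl : ρ ≤ l) (hvl : v ∈ l) (hvρ : v ∉ ρ)
    (hvb : ((v.1 + 1, v.2) : ℕ × ℕ) ∈ l)
    (huniq : ∀ c : ℕ × ℕ, c ∈ l → c ∉ ρ → ((c.1 + 1, c.2) : ℕ × ℕ) ∈ l → c = v) (m : ℕ) :
    (∑ ν ∈ subdiags l, if ν.card + 1 = l.card ∧ ρ ≤ ν ∧ IsStrip ν ρ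
        then w (m + 1) (l.cells \ ν.cells) else 0) = (m : ℚ) - v.1 + v.2 := by
  set κ : ℕ × ℕ := (v.1 + 1, v.2) with hκ
  have hκl : κ ∈ l.cells := (YoungDiagram.mem_cells _).mpr hvb
  have hκρ : κ ∉ ρ := below_not_ρ hvρ
  set ν₀ : YoungDiagram := ⟨l.cells.erase κ, vErase_lower hvl hvρ hvb huniq⟩ with hν₀
  have hmem : ν₀ ∈ subdiags l := by
    rw [mem_subdiags, ← YoungDiagram.cells_subset_iff]
    exact Finset.erase_subset _ _
  rw [Finset.sum_eq_single_of_mem ν₀ hmem ?_]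
  · rw [if_pos ?_]
    · show w (m + 1) (l.cells \ l.cells.erase κ) = _
      rw [sdiff_erase_self' hκl]
      unfold w
      rw [Finset.sum_singleton]
      simp only [hκ]
      push_cast
      ring
    · refine ⟨?_, ?_, ?_⟩
      · show (l.cells.erase κ).card + 1 = l.card
        rw [Finset.card_erase_of_mem hκl]
        have h1 : 1 ≤ l.cells.card := Finset.card_pos.mpr ⟨_, hκl⟩
        show l.cells.card - 1 + 1 = l.cells.card
        omega
      · rw [← YoungDiagram.cells_subset_iff]
        intro c hc
        refine Finset.mem_erase.mpr ⟨?_, cells_sub hρl hc⟩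
        rintro rfl
        exact hκρ ((YoungDiagram.mem_cells _).mp hc)
      · intro c hcν hcρ hbelow
        have hcν' : c ∈ l.cells.erase κ := hcν
        have hbelow' : ((c.1 + 1, c.2) : ℕ × ℕ) ∈ l.cells.erase κ := hbelow
        have hcl : c ∈ l := (YoungDiagram.mem_cells _).mp (Finset.mem_of_mem_erase hcν')
        have hbl : ((c.1 + 1, c.2) : ℕ × ℕ) ∈ l :=
          (YoungDiagram.mem_cells _).mp (Finset.mem_of_mem_erase hbelow')
        have hcv := huniq c hcl hcρ hbl
        subst hcv
        exact (Finset.mem_erase.mp hbelow').1 rfl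
  · intro ν hνS hne
    split_ifs with hP
    · exfalso
      obtain ⟨hcard, hρν, hstrip⟩ := hP
      have hνl := mem_subdiags.mp hνS
      have hspec := theCell_spec (diff_singleton hνl hcard)
      set b := theCell (l.cells \ ν.cells) with hbdef
      have hvν : v ∈ ν := by
        by_contra hvν
        have hvd : v ∈ l.cells \ ν.cells := Finset.mem_sdiff.mpr
          ⟨(YoungDiagram.mem_cells _).mpr hvl, fun h => hvν ((YoungDiagram.mem_cells _).mp h)⟩
        rw [hspec, Finset.mem_singleton] at hvd
        -- b = v ; but then κ ∈ ν and ν lower gives v ∈ ν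
        have hκν : κ ∈ ν.cells := by
          by_contra hκν
          have : κ ∈ l.cells \ ν.cells := Finset.mem_sdiff.mpr ⟨hκl, hκν⟩
          rw [hspec, Finset.mem_singleton] at this
          rw [← hvd] at this
          have h1 := congrArg Prod.fst this
          simp only [hκ] at h1
          omega
        have : v ∈ ν := by
          have h2 : ((v.1, v.2) : ℕ × ℕ) ∈ ν :=
            ν.up_left_mem (Nat.le_succ _) le_rfl ((YoungDiagram.mem_cells _).mp hκν)
          rwa [Prod.mk.eta] at h2
        exact hvν this
      have hκnν : κ ∉ ν := by
        intro hκν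
        exact hstrip v hvν hvρ hκν
      have hκd : κ ∈ l.cells \ ν.cells := Finset.mem_sdiff.mpr
        ⟨hκl, fun h => hκnν ((YoungDiagram.mem_cells _).mp h)⟩
      rw [hspec, Finset.mem_singleton] at hκd
      have hform := unique_corner_form hνl hspec
      apply hne
      apply YoungDiagram.ext
      rw [hform.2, ← hκd]
    · rfl

lemma sumL_zero (hρl : ρ ≤ l) {v v' : ℕ × ℕ} (hvl : v ∈ l) (hvρ : v ∉ ρ)
    (hvb : ((v.1 + 1, v.2) : ℕ × ℕ) ∈ l) (hv'l : v' ∈ l) (hv'ρ : v' ∉ ρ)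
    (hv'b : ((v'.1 + 1, v'.2) : ℕ × ℕ) ∈ l) (hne : v ≠ v') :
    (∑ μ ∈ subdiags l, if IsStrip l μ ∧ ρ ≤ μ ∧ ρ.card + 1 = μ.card
        then w m (μ.cells \ ρ.cells) else 0) = 0 := by
  refine Finset.sum_eq_zero fun μ hμS => ?_
  split_ifs with hP
  · exfalso
    obtain ⟨hstrip, hρμ, hcard⟩ := hP
    have hspec := theCell_spec (diff_singleton hρμ hcard)
    have key : ∀ u : ℕ × ℕ, u ∈ l → u ∉ ρ → ((u.1 + 1, u.2) : ℕ × ℕ) ∈ l →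
        u = theCell (μ.cells \ ρ.cells) := by
      intro u hul huρ hub
      have huμ : u ∈ μ := by
        by_contra huμ
        exact hstrip u hul huμ hub
      have hud : u ∈ μ.cells \ ρ.cells := Finset.mem_sdiff.mpr
        ⟨(YoungDiagram.mem_cells _).mpr huμ, fun h => huρ ((YoungDiagram.mem_cells _).mp h)⟩
      rw [hspec, Finset.mem_singleton] at hud
      exact hud
    exact hne ((key v hvl hvρ hvb).trans (key v' hv'l hv'ρ hv'b).symm)
  · rfl

lemma sumR_zero (hρl : ρ ≤ l) {v v' : ℕ × ℕ} (hvl : v ∈ l) (hvρ : v ∉ ρ)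
    (hvb : ((v.1 + 1, v.2) : ℕ × ℕ) ∈ l) (hv'l : v' ∈ l) (hv'ρ : v' ∉ ρ)
    (hv'b : ((v'.1 + 1, v'.2) : ℕ × ℕ) ∈ l) (hne : v ≠ v') (m : ℕ) :
    (∑ ν ∈ subdiags l, if ν.card + 1 = l.card ∧ ρ ≤ ν ∧ IsStrip ν ρ
        then w (m + 1) (l.cells \ ν.cells) else 0) = 0 := by
  refine Finset.sum_eq_zero fun ν hνS => ?_
  split_ifs with hP
  · exfalso
    obtain ⟨hcard, hρν, hstrip⟩ := hP
    have hνl := mem_subdiags.mp hνS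
    have hspec := theCell_spec (diff_singleton hνl hcard)
    set b := theCell (l.cells \ ν.cells) with hbdef
    have key : ∀ u : ℕ × ℕ, u ∈ l → u ∉ ρ → ((u.1 + 1, u.2) : ℕ × ℕ) ∈ l →
        ((u.1 + 1, u.2) : ℕ × ℕ) = b := by
      intro u hul huρ hub
      have huν : u ∈ ν := by
        by_contra huν
        have hud : u ∈ l.cells \ ν.cells := Finset.mem_sdiff.mpr
          ⟨(YoungDiagram.mem_cells _).mpr hul, fun h => huν ((YoungDiagram.mem_cells _).mp h)⟩
        rw [hspec, Finset.mem_singleton] at hud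
        -- u = b; below u ∈ ν (since ≠ b), so u ∈ ν by lowerness
        have hbν : ((u.1 + 1, u.2) : ℕ × ℕ) ∈ ν.cells := by
          by_contra hbν
          have : ((u.1 + 1, u.2) : ℕ × ℕ) ∈ l.cells \ ν.cells := Finset.mem_sdiff.mpr
            ⟨(YoungDiagram.mem_cells _).mpr hub, hbν⟩
          rw [hspec, Finset.mem_singleton] at this
          rw [← hud] at this
          have h1 := congrArg Prod.fst this
          simp only at h1
          omega
        have h2 : ((u.1, u.2) : ℕ × ℕ) ∈ ν :=
          ν.up_left_mem (Nat.le_succ _) le_rfl ((YoungDiagram.mem_cells _).mp hbν)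
        rw [Prod.mk.eta] at h2
        exact huν h2
      have hbnν : ((u.1 + 1, u.2) : ℕ × ℕ) ∉ ν := hstrip u huν huρ
      have : ((u.1 + 1, u.2) : ℕ × ℕ) ∈ l.cells \ ν.cells := Finset.mem_sdiff.mpr
        ⟨(YoungDiagram.mem_cells _).mpr hub, fun h => hbnν ((YoungDiagram.mem_cells _).mp h)⟩
      rw [hspec, Finset.mem_singleton] at this
      exact this
    have hvv := (key v hvl hvρ hvb).trans (key v' hv'l hv'ρ hv'b).symm
    apply hne
    have h1 := congrArg Prod.fst hvv
    have h2 := congrArg Prod.snd hvv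
    simp only at h1 h2
    exact Prod.ext (by omega) h2
  · rfl

end SingleCase

theorem dagger (m : ℕ) (hρl : ρ ≤ l) :
    (∑ μ ∈ subdiags l, if IsStrip l μ ∧ ρ ≤ μ ∧ ρ.card + 1 = μ.card
        then w m (μ.cells \ ρ.cells) else 0)
      + (if IsStrip l ρ then ((l.card - ρ.card : ℕ) : ℚ) else 0)
    = ∑ ν ∈ subdiags l, if ν.card + 1 = l.card ∧ ρ ≤ ν ∧ IsStrip ν ρ
        then w (m + 1) (l.cells \ ν.cells) else 0 := by
  by_cases hs : IsStrip l ρ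
  · rw [if_pos hs, sumL_strip hρl hs m, sumR_strip hρl hs m]
    have hcard : ((l.card - ρ.card : ℕ) : ℚ)
        = ∑ i ∈ (Finset.range (l.colLen 0)).filter (fun i => ρ.rowLen i < l.rowLen i),
            ((l.rowLen i : ℚ) - ρ.rowLen i) := by
      have h1 : l.card - ρ.card = (l.cells \ ρ.cells).card := by
        rw [Finset.card_sdiff_of_subset (YoungDiagram.cells_subset_iff.mpr hρl)]
      rw [h1, card_sdiff_rows hρl, Nat.cast_sum]
      rw [show (∑ i ∈ Finset.range (l.colLen 0), ((l.rowLen i - ρ.rowLen i : ℕ) : ℚ))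
          = ∑ i ∈ (Finset.range (l.colLen 0)).filter (fun i => ρ.rowLen i < l.rowLen i),
              ((l.rowLen i - ρ.rowLen i : ℕ) : ℚ) from
        (Finset.sum_filter_of_ne (fun x hx hne => by
          by_contra hcon
          push_neg at hcon
          have hz : l.rowLen x - ρ.rowLen x = 0 := by omega
          rw [hz] at hne
          exact hne Nat.cast_zero)).symm]
      refine Finset.sum_congr rfl fun i hi => ?_
      obtain ⟨-, hlt⟩ := Finset.mem_filter.mp hi
      rw [Nat.cast_sub (rowLen_mono hρl i)]
    rw [hcard, ← Finset.sum_add_distrib]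
    refine Finset.sum_congr rfl fun i hi => ?_
    ring
  · rw [if_neg hs, add_zero]
    unfold IsStrip at hs
    push_neg at hs
    obtain ⟨v, hvl, hvρ, hvb⟩ := hs
    by_cases huniq : ∀ c : ℕ × ℕ, c ∈ l → c ∉ ρ → ((c.1 + 1, c.2) : ℕ × ℕ) ∈ l → c = v
    · rw [sumL_single hρl hvl hvρ hvb huniq m, sumR_single hρl hvl hvρ hvb huniq m]
    · push_neg at huniq
      obtain ⟨v', hv'l, hv'ρ, hv'b, hv'ne⟩ := huniq
      rw [sumL_zero hρl hvl hvρ hvb hv'l hv'ρ hv'b (fun h => hv'ne h.symm),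
        sumR_zero hρl hvl hvρ hvb hv'l hv'ρ hv'b (fun h => hv'ne h.symm) m]

end Dagger

section Assembly

lemma pderiv_last_rename (m : ℕ) (p : MvPolynomial (Fin m) ℚ) :
    pderiv (Fin.last m) (rename Fin.castSucc p) = 0 := by
  apply pderiv_eq_zero_of_notMem_vars
  intro h
  obtain ⟨i, -, hi⟩ := mem_vars_rename _ _ h
  exact (Fin.ne_last_of_lt (Fin.castSucc_lt_last i)) hi

lemma nabla_term (m k : ℕ) (p : MvPolynomial (Fin m) ℚ) :
    (∑ i : Fin (m + 1), pderiv i (rename Fin.castSucc p * X (Fin.last m) ^ k)) =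
      rename Fin.castSucc (∑ j : Fin m, pderiv j p) * X (Fin.last m) ^ k
        + ((k : ℕ) : ℚ) • (rename Fin.castSucc p * X (Fin.last m) ^ (k - 1)) := by
  rw [Fin.sum_univ_castSucc]
  have h1 : ∀ j : Fin m,
      pderiv (Fin.castSucc j) (rename Fin.castSucc p * X (Fin.last m) ^ k)
      = rename Fin.castSucc (pderiv j p) * X (Fin.last m) ^ k := by
    intro j
    rw [pderiv_mul, pderiv_rename (Fin.castSucc_injective m)]
    have hz : pderiv (Fin.castSucc j) ((X (Fin.last m) : MvPolynomial (Fin (m + 1)) ℚ) ^ k)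
        = 0 := by
      rw [pderiv_pow, pderiv_X_of_ne (Fin.ne_last_of_lt (Fin.castSucc_lt_last j)).symm]
      ring
    rw [hz, mul_zero, add_zero]
  have h2 : pderiv (Fin.last m) (rename Fin.castSucc p * X (Fin.last m) ^ k)
      = ((k : ℕ) : ℚ) • (rename Fin.castSucc p * X (Fin.last m) ^ (k - 1)) := by
    rw [pderiv_mul, pderiv_last_rename, zero_mul, zero_add, pderiv_pow, pderiv_X_self]
    rw [MvPolynomial.smul_eq_C_mul]
    rw [show (C ((k : ℕ) : ℚ) : MvPolynomial (Fin (m + 1)) ℚ) = ((k : ℕ) : MvPolynomial (Fin (m + 1)) ℚ) from map_natCast C k]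
    ring
  rw [Finset.sum_congr rfl (fun j _ => h1 j), h2, ← Finset.sum_mul, ← map_sum]

lemma filter_subdiags {l μ : YoungDiagram} (hμl : μ ≤ l) :
    (subdiags l).filter (fun ρ => ρ ≤ μ) = subdiags μ := by
  ext ρ
  rw [Finset.mem_filter, mem_subdiags, mem_subdiags]
  exact ⟨fun h => h.2, fun h => ⟨h.trans hμl, h⟩⟩

lemma ite_zero_sum {P : Prop} [Decidable P] {α M : Type*} [AddCommMonoid M]
    (s : Finset α) (f : α → M) :
    (if P then ∑ x ∈ s, f x else 0) = ∑ x ∈ s, (if P then f x else 0) := by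
  split_ifs with h
  · rfl
  · exact Finset.sum_const_zero.symm

lemma ite_smul_zero {P : Prop} [Decidable P] {M : Type*} [AddCommMonoid M] [Module ℚ M]
    (c : ℚ) (z : M) :
    (if P then c • z else 0) = (if P then c else (0 : ℚ)) • z := by
  split_ifs with h
  · rfl
  · rw [zero_smul]

lemma lhs_norm (m : ℕ) (l : YoungDiagram)
    (ih : ∀ μ : YoungDiagram, (∑ j : Fin m, pderiv j (schur μ m))
      = ∑ ρ ∈ subdiags μ, if ρ.card + 1 = μ.card
          then w m (μ.cells \ ρ.cells) • schur ρ m else 0) :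
    (∑ i : Fin (m + 1), pderiv i (schur l (m + 1)))
    = ∑ ρ ∈ subdiags l,
        ((∑ μ ∈ subdiags l, if IsStrip l μ ∧ ρ ≤ μ ∧ ρ.card + 1 = μ.card
            then w m (μ.cells \ ρ.cells) else 0)
          + (if IsStrip l ρ then ((l.card - ρ.card : ℕ) : ℚ) else 0))
          • (rename Fin.castSucc (schur ρ m) * X (Fin.last m) ^ (l.card - ρ.card - 1)) := by
  have step1 : (∑ i : Fin (m + 1), pderiv i (schur l (m + 1)))
      = ∑ μ ∈ subdiags l, (if IsStrip l μ then
          rename Fin.castSucc (∑ j : Fin m, pderiv j (schur μ m))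
            * X (Fin.last m) ^ (l.card - μ.card)
          + ((l.card - μ.card : ℕ) : ℚ) •
              (rename Fin.castSucc (schur μ m) * X (Fin.last m) ^ (l.card - μ.card - 1))
        else 0) := by
    have h1 : ∀ i : Fin (m + 1),
        pderiv i (schur l (m + 1))
        = ∑ μ ∈ subdiags l, (if IsStrip l μ then
            pderiv i (rename Fin.castSucc (schur μ m) * X (Fin.last m) ^ (l.card - μ.card))
          else 0) := by
      intro i
      rw [schur_branch l m, map_sum]
      refine Finset.sum_congr rfl fun μ _ => ?_
      split_ifs with h
      · rfl
      · exact map_zero _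
    rw [Finset.sum_congr rfl (fun i (_ : i ∈ Finset.univ) => h1 i), Finset.sum_comm]
    refine Finset.sum_congr rfl fun μ hμ => ?_
    rw [← ite_zero_sum]
    split_ifs with h
    · exact nabla_term m (l.card - μ.card) (schur μ m)
    · rfl
  rw [step1]
  have step2 : ∀ μ ∈ subdiags l,
      (if IsStrip l μ then
          rename Fin.castSucc (∑ j : Fin m, pderiv j (schur μ m))
            * X (Fin.last m) ^ (l.card - μ.card)
          + ((l.card - μ.card : ℕ) : ℚ) •
              (rename Fin.castSucc (schur μ m) * X (Fin.last m) ^ (l.card - μ.card - 1))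
        else 0)
      = (∑ ρ ∈ subdiags l, if IsStrip l μ ∧ ρ ≤ μ ∧ ρ.card + 1 = μ.card
            then w m (μ.cells \ ρ.cells)
              • (rename Fin.castSucc (schur ρ m) * X (Fin.last m) ^ (l.card - ρ.card - 1))
            else 0)
        + (if IsStrip l μ then ((l.card - μ.card : ℕ) : ℚ) else 0)
            • (rename Fin.castSucc (schur μ m) * X (Fin.last m) ^ (l.card - μ.card - 1)) := by
    intro μ hμ
    by_cases h : IsStrip l μ
    · rw [if_pos h, if_pos h]
      congr 1
      rw [ih μ, map_sum, Finset.sum_mul]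
      rw [← filter_subdiags (mem_subdiags.mp hμ), Finset.sum_filter]
      refine Finset.sum_congr rfl fun ρ _ => ?_
      by_cases h1 : ρ ≤ μ
      · by_cases h2 : ρ.card + 1 = μ.card
        · rw [if_pos h1, if_pos h2, if_pos ⟨h, h1, h2⟩, map_smul, smul_mul_assoc]
          have he : l.card - μ.card = l.card - ρ.card - 1 := by omega
          rw [he]
        · rw [if_pos h1, if_neg h2, if_neg (fun hc => h2 hc.2.2), map_zero, zero_mul]
      · rw [if_neg h1, if_neg (fun hc => h1 hc.2.1)]
    · rw [if_neg h, if_neg h, zero_smul, add_zero]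
      symm
      exact Finset.sum_eq_zero fun ρ _ => if_neg (fun hc => h hc.1)
  rw [Finset.sum_congr rfl step2, Finset.sum_add_distrib, Finset.sum_comm]
  have step3 : ∀ ρ ∈ subdiags l,
      (∑ μ ∈ subdiags l, if IsStrip l μ ∧ ρ ≤ μ ∧ ρ.card + 1 = μ.card
          then w m (μ.cells \ ρ.cells)
            • (rename Fin.castSucc (schur ρ m) * X (Fin.last m) ^ (l.card - ρ.card - 1))
          else 0)
      = (∑ μ ∈ subdiags l, if IsStrip l μ ∧ ρ ≤ μ ∧ ρ.card + 1 = μ.card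
            then w m (μ.cells \ ρ.cells) else 0)
          • (rename Fin.castSucc (schur ρ m) * X (Fin.last m) ^ (l.card - ρ.card - 1)) := by
    intro ρ _
    rw [Finset.sum_smul]
    exact Finset.sum_congr rfl fun μ _ => ite_smul_zero _ _
  rw [Finset.sum_congr rfl step3, ← Finset.sum_add_distrib]
  exact Finset.sum_congr rfl fun ρ _ => (add_smul _ _ _).symm

lemma rhs_norm (m : ℕ) (l : YoungDiagram) :
    (∑ ν ∈ subdiags l, if ν.card + 1 = l.card
        then w (m + 1) (l.cells \ ν.cells) • schur ν (m + 1) else 0)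
    = ∑ ρ ∈ subdiags l,
        (∑ ν ∈ subdiags l, if ν.card + 1 = l.card ∧ ρ ≤ ν ∧ IsStrip ν ρ
            then w (m + 1) (l.cells \ ν.cells) else 0)
          • (rename Fin.castSucc (schur ρ m) * X (Fin.last m) ^ (l.card - ρ.card - 1)) := by
  have step1 : ∀ ν ∈ subdiags l,
      (if ν.card + 1 = l.card
        then w (m + 1) (l.cells \ ν.cells) • schur ν (m + 1) else 0)
      = ∑ ρ ∈ subdiags l, (if ν.card + 1 = l.card ∧ ρ ≤ ν ∧ IsStrip ν ρ
          then w (m + 1) (l.cells \ ν.cells)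
            • (rename Fin.castSucc (schur ρ m) * X (Fin.last m) ^ (l.card - ρ.card - 1))
          else 0) := by
    intro ν hν
    by_cases h : ν.card + 1 = l.card
    · rw [if_pos h, schur_branch ν m, Finset.smul_sum]
      rw [← filter_subdiags (mem_subdiags.mp hν), Finset.sum_filter]
      refine Finset.sum_congr rfl fun ρ _ => ?_
      by_cases h1 : ρ ≤ ν
      · by_cases h2 : IsStrip ν ρ
        · rw [if_pos h1, if_pos h2, if_pos ⟨h, h1, h2⟩]
          have he : ν.card - ρ.card = l.card - ρ.card - 1 := by omega
          rw [he]
        · rw [if_pos h1, if_neg h2, if_neg (fun hc => h2 hc.2.2), smul_zero]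
      · rw [if_neg h1, if_neg (fun hc => h1 hc.2.1)]
    · rw [if_neg h]
      symm
      exact Finset.sum_eq_zero fun ρ _ => if_neg (fun hc => h hc.1)
  rw [Finset.sum_congr rfl step1, Finset.sum_comm]
  refine Finset.sum_congr rfl fun ρ _ => ?_
  rw [Finset.sum_smul]
  exact Finset.sum_congr rfl fun ν _ => ite_smul_zero _ _

lemma card_one_cells {l : YoungDiagram} (h : l.card = 1) :
    l.cells = {((0, 0) : ℕ × ℕ)} := by
  obtain ⟨a, ha⟩ := Finset.card_eq_one.mp h
  have hal : a ∈ l.cells := by rw [ha]; exact Finset.mem_singleton_self a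
  have h00 : ((0, 0) : ℕ × ℕ) ∈ l.cells :=
    (YoungDiagram.mem_cells _).mpr
      (l.up_left_mem (Nat.zero_le _) (Nat.zero_le _) ((YoungDiagram.mem_cells _).mp hal))
  rw [ha] at h00 ⊢
  rw [Finset.mem_singleton] at h00
  rw [h00]

lemma schur_zero_of_nonempty {ν : YoungDiagram} (hne : ν.cells.Nonempty) :
    schur ν 0 = 0 := by
  obtain ⟨x, hx⟩ := hne
  rw [schur_eq]
  haveI : IsEmpty (ν.cells → Fin 0) := ⟨fun T => (T ⟨x, hx⟩).elim0⟩
  rw [Finset.univ_eq_empty, Finset.sum_empty]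

theorem main : ∀ (n : ℕ) (l : YoungDiagram),
    (∑ i : Fin n, pderiv i (schur l n)) =
      ∑ ν ∈ subdiags l, if ν.card + 1 = l.card
        then w n (l.cells \ ν.cells) • schur ν n else 0 := by
  intro n
  induction n with
  | zero =>
    intro l
    rw [Finset.univ_eq_empty (α := Fin 0), Finset.sum_empty]
    symm
    refine Finset.sum_eq_zero fun ν hν => ?_
    split_ifs with hc
    · rcases Finset.eq_empty_or_nonempty ν.cells with he | hne
      · have hν0 : ν.card = 0 := Finset.card_eq_zero.mpr he
        have hl1 : l.card = 1 := by omega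
        have hw : w 0 (l.cells \ ν.cells) = 0 := by
          unfold w
          rw [he, Finset.sdiff_empty, card_one_cells hl1, Finset.sum_singleton]
          norm_num
        rw [hw, zero_smul]
      · rw [schur_zero_of_nonempty hne, smul_zero]
    · rfl
  | succ m ih =>
    intro l
    rw [lhs_norm m l ih, rhs_norm m l]
    refine Finset.sum_congr rfl fun ρ hρ => ?_
    rw [dagger m (mem_subdiags.mp hρ)]

end Assembly

end NablaSchur

/-- with `∇ = ∑_i ∂/∂x_i`, for a partition `λ` with at most `n` parts,
`∇ s_λ = ∑ (n - r + c) · s_{λ∖(r,c)}`, the sum being over the outside corners `(r,c)` of `λ`.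
Here the sum over corners is encoded as a sum over the Young diagrams `ν ⊆ λ` obtained from
`λ` by removing a single cell, the removed cell `(r,c)` contributing the coefficient
`n - r + c` (cells are 0-indexed, so this agrees with the 1-indexed quantity `n - r + c`). -/
theorem nabla_schur (n : ℕ) (lam : YoungDiagram) (hl : lam.colLen 0 ≤ n) :
    (∑ i : Fin n, MvPolynomial.pderiv i (schur lam n)) =
      ∑ᶠ nu : YoungDiagram,
        if nu ≤ lam ∧ nu.card + 1 = lam.card then
          (∑ rc ∈ lam.cells \ nu.cells, ((n : ℚ) - rc.1 + rc.2)) • schur nu n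
        else 0 := by
  rw [finsum_eq_sum_of_support_subset _ (s := NablaSchur.subdiags lam) ?_]
  · rw [NablaSchur.main n lam]
    refine Finset.sum_congr rfl fun ν hν => ?_
    have hle : ν ≤ lam := NablaSchur.mem_subdiags.mp hν
    by_cases hc : ν.card + 1 = lam.card
    · rw [if_pos hc, if_pos ⟨hle, hc⟩]
      rfl
    · rw [if_neg hc, if_neg (fun hh => hc hh.2)]
  · intro ν hν
    rw [Function.mem_support] at hν
    simp only [Finset.coe_sort_coe, Finset.mem_coe]
    rw [NablaSchur.mem_subdiags]
    by_contra hle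
    apply hν
    rw [if_neg (fun hh => hle hh.1)]
end

section
/- A counting identity: for a partition μ of k, nonnegative integers i ≤ k ≤ n, the product C(n-i, k-i) · f^{μ/(1^i)} equals the number of tableaux T ∈ SYT(μ, n) such that the labels 1, 2, ..., i all appear in the first column of T. -/
open MvPolynomial Finset
open scoped Classical

lemma colD_mem {i : ℕ} {c : ℕ × ℕ} : c ∈ colD i ↔ c.2 = 0 ∧ c.1 < i := by
  simp only [colD, rowD, YoungDiagram.mem_transpose, YoungDiagram.mem_ofRowLens,
    Prod.fst_swap, Prod.snd_swap, List.length_singleton]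
  constructor
  · rintro ⟨h1, h2⟩
    have h0 : c.2 = 0 := by omega
    simp only [List.getElem_singleton] at h2
    exact ⟨h0, h2⟩
  · rintro ⟨h1, h2⟩
    refine ⟨by omega, ?_⟩
    simpa [List.getElem_singleton] using h2

lemma colD_cells_card (i : ℕ) : (colD i).cells.card = i := by
  have : (colD i).cells = (Finset.range i).image (fun j => (j, 0)) := by
    ext c
    simp only [YoungDiagram.mem_cells, colD_mem, Finset.mem_image, Finset.mem_range]
    constructor
    · rintro ⟨h1, h2⟩
      exact ⟨c.1, h2, by rw [← h1]⟩
    · rintro ⟨j, hj, rfl⟩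
      exact ⟨rfl, hj⟩
  rw [this, Finset.card_image_of_injective _ (fun a b h => by simpa using h),
    Finset.card_range]

lemma colD_mem_cells {i : ℕ} {c : ℕ × ℕ} :
    c ∈ (colD i).cells ↔ c.2 = 0 ∧ c.1 < i := by
  rw [YoungDiagram.mem_cells]; exact colD_mem

lemma pos_lemma {n i : ℕ} {mu : YoungDiagram} (T : mu.cells → ℕ)
    (hinj : Function.Injective T) (hb : ∀ x, 1 ≤ T x ∧ T x ≤ n)
    (hcol : ∀ a b : mu.cells, a.1.2 = b.1.2 → a.1.1 < b.1.1 → T a < T b)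
    (hex : ∀ m : ℕ, 1 ≤ m → m ≤ i → ∃ x : mu.cells, x.1.2 = 0 ∧ T x = m) :
    ∀ j, j < i → ∃ h : ((j, 0) : ℕ × ℕ) ∈ mu.cells, T ⟨(j, 0), h⟩ = j + 1 := by
  intro j
  induction j using Nat.strong_induction_on with
  | _ j IH =>
    intro hj
    obtain ⟨x, hx0, hxv⟩ := hex (j + 1) (by omega) (by omega)
    have hx : x.1 = (x.1.1, 0) := by
      ext
      · rfl
      · exact hx0
    rcases lt_trichotomy x.1.1 j with h | h | h
    · obtain ⟨hm, hv⟩ := IH x.1.1 h (by omega)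
      have hxe : x = ⟨(x.1.1, 0), by rw [← hx]; exact x.2⟩ := Subtype.ext hx
      rw [hxe, hv] at hxv
      omega
    · have hm : ((j, 0) : ℕ × ℕ) ∈ mu.cells := by
        have := x.2
        rwa [hx, h] at this
      refine ⟨hm, ?_⟩
      have hxe : x = ⟨(j, 0), hm⟩ := Subtype.ext (by rw [hx, h])
      rw [← hxe]
      exact hxv
    · have hmem : ((x.1.1, x.1.2) : ℕ × ℕ) ∈ mu := by
        rw [Prod.mk.eta]
        exact (YoungDiagram.mem_cells _).mp x.2
      have hm : ((j, 0) : ℕ × ℕ) ∈ mu.cells := by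
        rw [YoungDiagram.mem_cells]
        exact mu.up_left_mem h.le (Nat.zero_le _) hmem
      have hlt : T ⟨(j, 0), hm⟩ < T x := hcol ⟨(j, 0), hm⟩ x hx0.symm h
      rw [hxv] at hlt
      rcases Nat.eq_zero_or_pos j with rfl | hj0
      · have := (hb ⟨(0, 0), hm⟩).1
        omega
      · obtain ⟨hm', hv'⟩ := IH (j - 1) (by omega) (by omega)
        have hlt2 : T ⟨(j - 1, 0), hm'⟩ < T ⟨(j, 0), hm⟩ :=
          hcol _ _ rfl (by show j - 1 < j; omega)
        omega
lemma orderIso_symm_val {S S' : Finset ℕ} {m : ℕ} (hSS : S' = S) (h' : S'.card = m)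
    (h : S.card = m) (v : ℕ) (hv : v ∈ S') (j : Fin m)
    (hj : (S.orderIsoOfFin h j : ℕ) = v) :
    (S'.orderIsoOfFin h').symm ⟨v, hv⟩ = j := by
  subst hSS
  have hvj : (⟨v, hv⟩ : {x // x ∈ S'}) = S'.orderIsoOfFin h' j := Subtype.ext hj.symm
  rw [hvj]
  exact OrderIso.symm_apply_apply _ j
noncomputable def fillingEquiv (s : Finset (ℕ × ℕ)) (a n : ℕ) :
    {T : s → ℕ // Function.Injective T ∧ (∀ x, a + 1 ≤ T x ∧ T x ≤ n) ∧
      (∀ p q : s, p.1.1 = q.1.1 → p.1.2 < q.1.2 → T p < T q) ∧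
      (∀ p q : s, p.1.2 = q.1.2 → p.1.1 < q.1.1 → T p < T q)} ≃
    {S : Finset ℕ // S ∈ (Finset.Icc (a + 1) n).powersetCard s.card} ×
    {U : s → ℕ // Function.Injective U ∧ (∀ x, U x < s.card) ∧
      (∀ p q : s, p.1.1 = q.1.1 → p.1.2 < q.1.2 → U p < U q) ∧
      (∀ p q : s, p.1.2 = q.1.2 → p.1.1 < q.1.1 → U p < U q)} where
  toFun T :=
    have hS : (Finset.univ.image T.1).card = s.card := by
      rw [Finset.card_image_of_injective _ T.2.1, Finset.card_univ, Fintype.card_coe]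
    ⟨⟨Finset.univ.image T.1, by
        rw [Finset.mem_powersetCard]
        refine ⟨?_, hS⟩
        intro v hv
        simp only [Finset.mem_image] at hv
        obtain ⟨x, -, rfl⟩ := hv
        exact Finset.mem_Icc.mpr ⟨(T.2.2.1 x).1, (T.2.2.1 x).2⟩⟩,
     ⟨fun x => (((Finset.univ.image T.1).orderIsoOfFin hS).symm
        ⟨T.1 x, Finset.mem_image_of_mem _ (Finset.mem_univ x)⟩).val, by
      set e := (Finset.univ.image T.1).orderIsoOfFin hS with hedef
      have hmono : ∀ x y : s, T.1 x < T.1 y →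
          (e.symm ⟨T.1 x, Finset.mem_image_of_mem _ (Finset.mem_univ x)⟩).val <
          (e.symm ⟨T.1 y, Finset.mem_image_of_mem _ (Finset.mem_univ y)⟩).val := by
        intro x y hxy
        exact e.symm.strictMono (Subtype.mk_lt_mk.mpr hxy)
      refine ⟨?_, fun x => Fin.is_lt _, fun p q h1 h2 => hmono _ _ (T.2.2.2.1 p q h1 h2),
        fun p q h1 h2 => hmono _ _ (T.2.2.2.2 p q h1 h2)⟩
      intro x y hxy
      apply T.2.1
      have := e.symm.injective (Fin.val_injective hxy)
      exact congrArg Subtype.val this⟩⟩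
  invFun P := by
    obtain ⟨⟨S, hS⟩, ⟨U, hU⟩⟩ := P
    rw [Finset.mem_powersetCard] at hS
    refine ⟨fun x => (S.orderIsoOfFin hS.2 ⟨U x, hU.2.1 x⟩ : ℕ), ?_, ?_, ?_, ?_⟩
    · intro x y hxy
      apply hU.1
      have := (S.orderIsoOfFin hS.2).injective (Subtype.val_injective hxy)
      exact congrArg Fin.val this
    · intro x
      have hmem := (S.orderIsoOfFin hS.2 ⟨U x, hU.2.1 x⟩).2
      exact Finset.mem_Icc.mp (hS.1 hmem)
    · intro p q h1 h2
      exact Subtype.coe_lt_coe.mpr ((S.orderIsoOfFin hS.2).strictMono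
        (Fin.mk_lt_mk.mpr (hU.2.2.1 p q h1 h2)))
    · intro p q h1 h2
      exact Subtype.coe_lt_coe.mpr ((S.orderIsoOfFin hS.2).strictMono
        (Fin.mk_lt_mk.mpr (hU.2.2.2 p q h1 h2)))
  left_inv T := by
    apply Subtype.ext
    funext x
    simp only [Fin.eta, OrderIso.apply_symm_apply]
  right_inv P := by
    obtain ⟨⟨S, hS⟩, U, hU⟩ := P
    have hS' := Finset.mem_powersetCard.mp hS
    have hinj : Function.Injective
        (fun x : s => (S.orderIsoOfFin hS'.2 ⟨U x, hU.2.1 x⟩ : ℕ)) := by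
      intro x y hxy
      apply hU.1
      have := (S.orderIsoOfFin hS'.2).injective (Subtype.val_injective hxy)
      exact congrArg Fin.val this
    have himg : Finset.univ.image
        (fun x : s => (S.orderIsoOfFin hS'.2 ⟨U x, hU.2.1 x⟩ : ℕ)) = S := by
      apply Finset.eq_of_subset_of_card_le
      · intro v hv
        simp only [Finset.mem_image] at hv
        obtain ⟨x, -, rfl⟩ := hv
        exact (S.orderIsoOfFin hS'.2 _).2
      · rw [Finset.card_image_of_injective _ hinj, Finset.card_univ, Fintype.card_coe,
          hS'.2]
    refine Prod.ext (Subtype.ext ?_) (Subtype.ext ?_)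
    · exact himg
    · funext x
      exact congrArg Fin.val (orderIso_symm_val himg
        (by rw [himg]; exact hS'.2) hS'.2 _ _ ⟨U x, hU.2.1 x⟩ rfl)

lemma count_strict_fillings (s : Finset (ℕ × ℕ)) (a n : ℕ) :
    Nat.card {T : s → ℕ // Function.Injective T ∧ (∀ x, a + 1 ≤ T x ∧ T x ≤ n) ∧
      (∀ p q : s, p.1.1 = q.1.1 → p.1.2 < q.1.2 → T p < T q) ∧
      (∀ p q : s, p.1.2 = q.1.2 → p.1.1 < q.1.1 → T p < T q)} =
    (n - a).choose s.card * sytCountCells s := by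
  rw [Nat.card_congr (fillingEquiv s a n), Nat.card_prod]
  congr 1
  · rw [Nat.card_eq_finsetCard, Finset.card_powersetCard, Nat.card_Icc]
    congr 1
    omega
noncomputable def mainEquiv (n i : ℕ) (mu : YoungDiagram) (hle : colD i ≤ mu)
    (hin : i ≤ n) :
    {T : mu.cells → ℕ // Function.Injective T ∧ (∀ x, 1 ≤ T x ∧ T x ≤ n) ∧
        (∀ a b : mu.cells, a.1.1 = b.1.1 → a.1.2 < b.1.2 → T a < T b) ∧
        (∀ a b : mu.cells, a.1.2 = b.1.2 → a.1.1 < b.1.1 → T a < T b) ∧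
        (∀ m : ℕ, 1 ≤ m → m ≤ i → ∃ x : mu.cells, x.1.2 = 0 ∧ T x = m)} ≃
    {T : (mu.cells \ (colD i).cells : Finset (ℕ × ℕ)) → ℕ //
        Function.Injective T ∧ (∀ x, i + 1 ≤ T x ∧ T x ≤ n) ∧
        (∀ p q : (mu.cells \ (colD i).cells : Finset (ℕ × ℕ)),
          p.1.1 = q.1.1 → p.1.2 < q.1.2 → T p < T q) ∧
        (∀ p q : (mu.cells \ (colD i).cells : Finset (ℕ × ℕ)),
          p.1.2 = q.1.2 → p.1.1 < q.1.1 → T p < T q)} where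
  toFun T := by
    obtain ⟨T, hinj, hb, hrow, hcol, hex⟩ := T
    refine ⟨fun x => T ⟨x.1, (Finset.mem_sdiff.mp x.2).1⟩, ?_, ?_, ?_, ?_⟩
    · intro x y h
      have := hinj h
      exact Subtype.ext (Subtype.mk_eq_mk.mp this)
    · intro x
      refine ⟨?_, (hb _).2⟩
      by_contra hcon
      push_neg at hcon
      set m := T ⟨x.1, (Finset.mem_sdiff.mp x.2).1⟩ with hm
      have hm1 : 1 ≤ m := (hb _).1
      obtain ⟨hmem, hval⟩ := pos_lemma T hinj hb hcol hex (m - 1) (by omega)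
      have : (⟨x.1, (Finset.mem_sdiff.mp x.2).1⟩ : mu.cells) = ⟨(m - 1, 0), hmem⟩ := by
        apply hinj
        rw [hval, ← hm]
        omega
      have hx1 : x.1 = (m - 1, 0) := congrArg Subtype.val this
      have : x.1 ∈ (colD i).cells := by
        rw [colD_mem_cells, hx1]
        exact ⟨rfl, by omega⟩
      exact (Finset.mem_sdiff.mp x.2).2 this
    · intro p q h1 h2
      exact hrow _ _ h1 h2
    · intro p q h1 h2
      exact hcol _ _ h1 h2
  invFun T := by
    obtain ⟨T, hinj, hb, hrow, hcol⟩ := T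
    have hsub : (colD i).cells ⊆ mu.cells := YoungDiagram.cells_subset_iff.mpr hle
    refine ⟨fun x => if h : x.1 ∈ (colD i).cells then x.1.1 + 1
      else T ⟨x.1, Finset.mem_sdiff.mpr ⟨x.2, h⟩⟩, ?_, ?_, ?_, ?_, ?_⟩
    · intro x y h
      dsimp only at h
      by_cases hx : x.1 ∈ (colD i).cells <;> by_cases hy : y.1 ∈ (colD i).cells <;>
        [rw [dif_pos hx, dif_pos hy] at h; rw [dif_pos hx, dif_neg hy] at h;
         rw [dif_neg hx, dif_pos hy] at h; rw [dif_neg hx, dif_neg hy] at h]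
      · apply Subtype.ext
        have h2x := (colD_mem_cells.mp hx).1
        have h2y := (colD_mem_cells.mp hy).1
        ext
        · omega
        · omega
      · have := (colD_mem_cells.mp hx).2
        have := (hb ⟨y.1, Finset.mem_sdiff.mpr ⟨y.2, hy⟩⟩).1
        omega
      · have := (colD_mem_cells.mp hy).2
        have := (hb ⟨x.1, Finset.mem_sdiff.mpr ⟨x.2, hx⟩⟩).1
        omega
      · exact Subtype.ext (Subtype.mk_eq_mk.mp (hinj h))
    · intro x
      dsimp only
      by_cases hx : x.1 ∈ (colD i).cells <;> [rw [dif_pos hx]; rw [dif_neg hx]]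
      · have := (colD_mem_cells.mp hx).2
        omega
      · have := hb ⟨x.1, Finset.mem_sdiff.mpr ⟨x.2, hx⟩⟩
        omega
    · intro a b h1 h2
      dsimp only
      by_cases hx : a.1 ∈ (colD i).cells <;> by_cases hy : b.1 ∈ (colD i).cells <;>
        [rw [dif_pos hx, dif_pos hy]; rw [dif_pos hx, dif_neg hy];
         rw [dif_neg hx, dif_pos hy]; rw [dif_neg hx, dif_neg hy]]
      · have := (colD_mem_cells.mp hx).1
        have := (colD_mem_cells.mp hy).1
        omega
      · have := (colD_mem_cells.mp hx).2
        have := (hb ⟨b.1, Finset.mem_sdiff.mpr ⟨b.2, hy⟩⟩).1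
        omega
      · have := (colD_mem_cells.mp hy).1
        omega
      · exact hrow _ _ h1 h2
    · intro a b h1 h2
      dsimp only
      by_cases hx : a.1 ∈ (colD i).cells <;> by_cases hy : b.1 ∈ (colD i).cells <;>
        [rw [dif_pos hx, dif_pos hy]; rw [dif_pos hx, dif_neg hy];
         rw [dif_neg hx, dif_pos hy]; rw [dif_neg hx, dif_neg hy]]
      · omega
      · have := (colD_mem_cells.mp hx).2
        have := (hb ⟨b.1, Finset.mem_sdiff.mpr ⟨b.2, hy⟩⟩).1
        omega
      · exfalso
        apply hx
        have hyc := colD_mem_cells.mp hy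
        rw [colD_mem_cells]
        omega
      · exact hcol _ _ h1 h2
    · intro m hm1 hmi
      have hcell : ((m - 1, 0) : ℕ × ℕ) ∈ (colD i).cells := by
        rw [colD_mem_cells]
        exact ⟨rfl, by omega⟩
      refine ⟨⟨(m - 1, 0), hsub hcell⟩, rfl, ?_⟩
      dsimp only
      rw [dif_pos hcell]
      omega
  left_inv T := by
    obtain ⟨T, hinj, hb, hrow, hcol, hex⟩ := T
    apply Subtype.ext
    funext x
    simp only
    split_ifs with h
    · obtain ⟨h0, hlt⟩ := colD_mem_cells.mp h
      obtain ⟨hmem, hval⟩ := pos_lemma T hinj hb hcol hex x.1.1 hlt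
      have hxe : x = ⟨(x.1.1, 0), hmem⟩ := by
        apply Subtype.ext
        ext
        · rfl
        · exact h0
      rw [← hval]
      exact congrArg T hxe.symm
    · exact congrArg T (Subtype.ext rfl)
  right_inv T := by
    obtain ⟨T, hinj, hb, hrow, hcol⟩ := T
    apply Subtype.ext
    funext x
    simp only
    rw [dif_neg (Finset.mem_sdiff.mp x.2).2]

/-- for a partition `μ` of `k` and `i ≤ k ≤ n`,
`C(n-i, k-i) · f^{μ/(1^i)}` equals the number of fillings of `μ` by distinct elements of
`{1,…,n}`, strictly increasing along rows and columns, in which the labels `1,…,i` all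
appear in the first column. -/
theorem choose_mul_sytSkew_column (n k i : ℕ) (hik : i ≤ k) (hkn : k ≤ n)
    (mu : YoungDiagram) (hmu : mu.card = k) :
    (n - i).choose (k - i) * sytSkew mu (colD i) =
      Nat.card {T : mu.cells → ℕ //
        Function.Injective T ∧ (∀ x, 1 ≤ T x ∧ T x ≤ n) ∧
        (∀ a b : mu.cells, a.1.1 = b.1.1 → a.1.2 < b.1.2 → T a < T b) ∧
        (∀ a b : mu.cells, a.1.2 = b.1.2 → a.1.1 < b.1.1 → T a < T b) ∧
        (∀ m : ℕ, 1 ≤ m → m ≤ i → ∃ x : mu.cells, x.1.2 = 0 ∧ T x = m)} := by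
  by_cases hle : colD i ≤ mu
  · have hsub : (colD i).cells ⊆ mu.cells := YoungDiagram.cells_subset_iff.mpr hle
    have hmuc : mu.cells.card = k := hmu
    have hscard : (mu.cells \ (colD i).cells).card = k - i := by
      rw [Finset.card_sdiff_of_subset hsub, colD_cells_card, hmuc]
    rw [sytSkew, if_pos hle, ← hscard,
      ← count_strict_fillings (mu.cells \ (colD i).cells) i n]
    exact (Nat.card_congr (mainEquiv n i mu hle (le_trans hik hkn))).symm
  · rw [sytSkew, if_neg hle, mul_zero]
    symm
    rw [Nat.card_eq_zero]
    left
    refine ⟨fun X => ?_⟩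
    obtain ⟨T, hinj, hb, hrow, hcol, hex⟩ := X
    apply hle
    rw [← YoungDiagram.cells_subset_iff]
    intro c hc
    obtain ⟨h0, hlt⟩ := colD_mem_cells.mp hc
    obtain ⟨hmem, -⟩ := pos_lemma T hinj hb hcol hex c.1 hlt
    have : c = (c.1, 0) := by
      ext
      · rfl
      · exact h0
    rwa [this]
end

section
/- Bijection between standard tableaux of shifted shape and pairs: for a partition μ of k with fewer than n parts, the number of standard Young tableaux of shape μ + (1^{n-1}) equals the number of pairs (S,T) where S is a semistandard Young tableau of shape (k) (a single row of k boxes) with entries in {1,...,n} and T is a standard Young tableau of shape μ, such that for each i, if i appears in row r of T, then the i-th smallest entry of S (with ties broken by reading position) is strictly greater than r. -/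
open MvPolynomial Finset
open scoped Classical

/-- The cells of the partition `μ + (1^m)` obtained by adding one box to each of the first
`m` rows of `μ` (padding `μ` with zero rows as needed). -/
noncomputable def addColCells (mu : YoungDiagram) (m : ℕ) : Finset (ℕ × ℕ) :=
  (Finset.range (mu.colLen 0 + m) ×ˢ Finset.range (mu.rowLen 0 + 1)).filter
    (fun p => p.2 < mu.rowLen p.1 + (if p.1 < m then 1 else 0))

section SytAux

variable {α : Type*}
variable {α : Type*}

lemma finImageVal {k : ℕ} : (univ : Finset (Fin k)).image Fin.val = range k := by
  ext a
  simp only [mem_image, mem_range, mem_univ, true_and]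
  exact ⟨fun ⟨w, hw⟩ => hw ▸ w.2, fun h => ⟨⟨a, h⟩, rfl⟩⟩

lemma finCardFilter {k : ℕ} (P : ℕ → Prop) [DecidablePred P] :
    ((univ : Finset (Fin k)).filter fun w : Fin k => P (w : ℕ)).card
      = ((range k).filter P).card := by
  calc ((univ : Finset (Fin k)).filter fun w : Fin k => P (w : ℕ)).card
      = (((univ : Finset (Fin k)).filter fun w : Fin k => P (w : ℕ)).image Fin.val).card :=
        (card_image_of_injOn (Set.injOn_of_injective Fin.val_injective)).symm
    _ = (((univ : Finset (Fin k)).image Fin.val).filter P).card := by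
        rw [Finset.filter_image (s := (univ : Finset (Fin k))) (f := Fin.val) (p := P)]
    _ = ((range k).filter P).card := by rw [finImageVal]

lemma finCardLt {k : ℕ} (v : Fin k) :
    ((univ : Finset (Fin k)).filter fun w : Fin k => (w : ℕ) < (v : ℕ)).card = (v : ℕ) := by
  rw [finCardFilter (fun t => t < (v : ℕ))]
  have h : (range k).filter (fun t => t < (v : ℕ)) = range (v : ℕ) := by
    ext a
    simp only [mem_filter, mem_range]
    have := v.2
    omega
  rw [h, card_range]

lemma finCardLe {k : ℕ} (v : Fin k) :
    ((univ : Finset (Fin k)).filter fun w : Fin k => (w : ℕ) ≤ (v : ℕ)).card = (v : ℕ) + 1 := by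
  rw [finCardFilter (fun t => t ≤ (v : ℕ))]
  have h : (range k).filter (fun t => t ≤ (v : ℕ)) = range ((v : ℕ) + 1) := by
    ext a
    simp only [mem_filter, mem_range]
    have := v.2
    omega
  rw [h, card_range]

lemma rank_mono (s : Finset α) (g : α → ℕ) {t t' : ℕ} (h : t ≤ t') :
    (s.filter fun y => g y < t).card ≤ (s.filter fun y => g y < t').card :=
  card_le_card (monotone_filter_right s (fun y _ (hy : g y < t) => lt_of_lt_of_le hy h))

lemma rank_lt_rank (s : Finset α) (g : α → ℕ) {x : α} (hx : x ∈ s) {t : ℕ} (h : g x < t) :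
    (s.filter fun y => g y < g x).card < (s.filter fun y => g y < t).card := by
  apply card_lt_card
  rw [Finset.ssubset_iff_of_subset
    (monotone_filter_right s (fun y _ (hy : g y < g x) => lt_trans hy h))]
  exact ⟨x, mem_filter.2 ⟨hx, h⟩, by simp⟩

lemma image_eq_range (s : Finset α) (g : α → ℕ) (k : ℕ)
    (hinj : ∀ a ∈ s, ∀ b ∈ s, g a = g b → a = b)
    (hb : ∀ a ∈ s, g a < k) (hcard : s.card = k) :
    s.image g = range k := by
  apply eq_of_subset_of_card_le
  · intro t ht
    simp only [mem_image] at ht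
    obtain ⟨a, ha, rfl⟩ := ht
    exact mem_range.2 (hb a ha)
  · rw [card_range, card_image_of_injOn hinj, hcard]

lemma rank_eq_self (s : Finset α) (g : α → ℕ) (k : ℕ)
    (hinj : ∀ a ∈ s, ∀ b ∈ s, g a = g b → a = b)
    (hb : ∀ a ∈ s, g a < k) (hcard : s.card = k) {x : α} (hx : x ∈ s) :
    (s.filter fun y => g y < g x).card = g x := by
  have h1 : ((s.filter fun y => g y < g x).image g) = range (g x) := by
    rw [(Finset.filter_image (s := s) (f := g) (p := fun t => t < g x)).symm,
      image_eq_range s g k hinj hb hcard]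
    ext a
    simp only [mem_filter, mem_range]
    have := hb x hx
    omega
  have h2 := card_image_of_injOn (f := g) (s := s.filter fun y => g y < g x)
    (fun a ha b hb' hab => hinj a (mem_filter.1 ha).1 b (mem_filter.1 hb').1 hab)
  rw [← h2, h1, card_range]

lemma count_comp (s : Finset α) (g : α → ℕ) (k : ℕ)
    (hinj : ∀ a ∈ s, ∀ b ∈ s, g a = g b → a = b)
    (hb : ∀ a ∈ s, g a < k) (hcard : s.card = k) (P : ℕ → Prop) [DecidablePred P] :
    (s.filter fun y => P (g y)).card
      = ((univ : Finset (Fin k)).filter fun w : Fin k => P (w : ℕ)).card := by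
  rw [finCardFilter]
  have h2 := card_image_of_injOn (f := g) (s := s.filter fun y => P (g y))
    (fun a ha b hb' hab => hinj a (mem_filter.1 ha).1 b (mem_filter.1 hb').1 hab)
  rw [← h2, (Finset.filter_image (s := s) (f := g) (p := P)).symm,
    image_eq_range s g k hinj hb hcard]
lemma rowLen_eq_zero' (mu : YoungDiagram) {i : ℕ} (h : mu.colLen 0 ≤ i) : mu.rowLen i = 0 := by
  by_contra hr
  exact absurd (YoungDiagram.mem_iff_lt_colLen.1
    (YoungDiagram.mem_iff_lt_rowLen.2 (Nat.pos_of_ne_zero hr))) (by omega)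

lemma addColCells_eq (mu : YoungDiagram) (m : ℕ) (hlen : mu.colLen 0 ≤ m) :
    addColCells mu m
      = ((range m).image fun i => ((i, 0) : ℕ × ℕ))
        ∪ mu.cells.image (fun y => (y.1, y.2 + 1)) := by
  ext ⟨i, j⟩
  simp only [addColCells, mem_filter, mem_product, mem_range, mem_union, mem_image,
    YoungDiagram.mem_cells, Prod.exists, Prod.mk.injEq]
  constructor
  · rintro ⟨⟨hi, hj⟩, hcond⟩
    split_ifs at hcond with him
    · rcases Nat.eq_zero_or_pos j with rfl | h0
      · exact Or.inl ⟨i, him, rfl, rfl⟩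
      · exact Or.inr ⟨i, j - 1, YoungDiagram.mem_iff_lt_rowLen.2 (by omega), rfl, by omega⟩
    · have := rowLen_eq_zero' mu (le_trans hlen (by omega) : mu.colLen 0 ≤ i)
      omega
  · rintro (⟨i', hi', rfl, rfl⟩ | ⟨a, b, hab, rfl, rfl⟩)
    · have h1 : (0:ℕ) < mu.rowLen i' + if i' < m then 1 else 0 := by
        rw [if_pos hi']; omega
      exact ⟨⟨by omega, by omega⟩, h1⟩
    · have hb := YoungDiagram.mem_iff_lt_rowLen.1 hab
      have hcol : a < mu.colLen 0 :=
        YoungDiagram.mem_iff_lt_colLen.1 (mu.up_left_mem (le_refl a) (Nat.zero_le b) hab)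
      have hrow : mu.rowLen a ≤ mu.rowLen 0 := mu.rowLen_anti 0 a (Nat.zero_le a)
      have h1 : b + 1 < mu.rowLen a + if a < m then 1 else 0 := by
        rw [if_pos (by omega)]; omega
      exact ⟨⟨by omega, by omega⟩, h1⟩

lemma addCol_disj (mu : YoungDiagram) (m : ℕ) :
    Disjoint ((range m).image fun i => ((i, 0) : ℕ × ℕ))
      (mu.cells.image (fun y => (y.1, y.2 + 1))) := by
  rw [Finset.disjoint_left]
  rintro p hp1 hp2
  simp only [mem_image] at hp1 hp2
  obtain ⟨i, _, rfl⟩ := hp1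
  obtain ⟨y, _, hy⟩ := hp2
  have := congrArg Prod.snd hy
  simp at this

lemma col_inj : Function.Injective (fun i => ((i, 0) : ℕ × ℕ)) := by
  intro a b h; simpa using h

lemma shift_inj : Function.Injective (fun y : ℕ × ℕ => (y.1, y.2 + 1)) := by
  intro a b h
  simp only [Prod.mk.injEq] at h
  exact Prod.ext h.1 (by omega)

lemma addColCells_card (mu : YoungDiagram) (m : ℕ) (hlen : mu.colLen 0 ≤ m) :
    (addColCells mu m).card = mu.card + m := by
  rw [addColCells_eq mu m hlen, card_union_of_disjoint (addCol_disj mu m),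
    card_image_of_injective _ col_inj, card_image_of_injective _ shift_inj, card_range]
  exact Nat.add_comm _ _

lemma col_mem_addCol (mu : YoungDiagram) (m : ℕ) (hlen : mu.colLen 0 ≤ m) {i : ℕ}
    (hi : i < m) : ((i, 0) : ℕ × ℕ) ∈ addColCells mu m := by
  rw [addColCells_eq mu m hlen]
  exact mem_union_left _ (mem_image.2 ⟨i, mem_range.2 hi, rfl⟩)

lemma shift_mem_addCol (mu : YoungDiagram) (m : ℕ) (hlen : mu.colLen 0 ≤ m) {y : ℕ × ℕ}
    (hy : y ∈ mu.cells) : ((y.1, y.2 + 1) : ℕ × ℕ) ∈ addColCells mu m := by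
  rw [addColCells_eq mu m hlen]
  exact mem_union_right _ (mem_image.2 ⟨y, hy, rfl⟩)

lemma mem_addCol_cases (mu : YoungDiagram) (m : ℕ) (hlen : mu.colLen 0 ≤ m) {p : ℕ × ℕ}
    (hp : p ∈ addColCells mu m) :
    (p.2 = 0 ∧ p.1 < m) ∨ (0 < p.2 ∧ (p.1, p.2 - 1) ∈ mu.cells) := by
  rw [addColCells_eq mu m hlen] at hp
  rcases mem_union.1 hp with h | h
  · obtain ⟨i, hi, rfl⟩ := mem_image.1 h
    exact Or.inl ⟨rfl, mem_range.1 hi⟩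
  · obtain ⟨y, hy, rfl⟩ := mem_image.1 h
    exact Or.inr ⟨by omega, by simpa using hy⟩

lemma addCol_filter_split (mu : YoungDiagram) (m : ℕ) (hlen : mu.colLen 0 ≤ m)
    (f : ℕ × ℕ → ℕ) (t : ℕ) :
    ((addColCells mu m).filter fun q => f q < t).card
      = ((range m).filter fun i => f (i, 0) < t).card
        + (mu.cells.filter fun y => f (y.1, y.2 + 1) < t).card := by
  rw [addColCells_eq mu m hlen, filter_union,
    card_union_of_disjoint (Finset.disjoint_filter_filter (addCol_disj mu m)),
    Finset.filter_image (s := range m) (f := fun i => ((i, 0) : ℕ × ℕ)) (p := fun q => f q < t),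
    Finset.filter_image (s := mu.cells) (f := fun y : ℕ × ℕ => (y.1, y.2 + 1))
      (p := fun q => f q < t),
    card_image_of_injective _ col_inj, card_image_of_injective _ shift_inj]

/-! ### Core data -/

noncomputable def rankSh (mu : YoungDiagram) (f : ℕ × ℕ → ℕ) : ℕ → ℕ :=
  fun t => (mu.cells.filter fun y => f (y.1, y.2 + 1) < t).card

noncomputable def Tof (mu : YoungDiagram) (f : ℕ × ℕ → ℕ) : {x // x ∈ mu.cells} → ℕ :=
  fun x => rankSh mu f (f (x.1.1, x.1.2 + 1))

noncomputable def Sof (mu : YoungDiagram) (m k : ℕ) (f : ℕ × ℕ → ℕ) : Fin k → ℕ :=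
  fun v => 1 + ((range m).filter fun i => rankSh mu f (f (i, 0)) ≤ (v : ℕ)).card

noncomputable def Text (mu : YoungDiagram) (T : {x // x ∈ mu.cells} → ℕ) : ℕ × ℕ → ℕ :=
  fun p => if h : p ∈ mu.cells then T ⟨p, h⟩ else 0

noncomputable def cOf (k : ℕ) (S : Fin k → ℕ) : ℕ → ℕ :=
  fun i => i + ((univ : Finset (Fin k)).filter fun v : Fin k => S v ≤ i + 1).card

noncomputable def bOf (k : ℕ) (S : Fin k → ℕ) : ℕ → ℕ :=
  fun w => if h : w < k then w + (S ⟨w, h⟩ - 1) else 0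

noncomputable def gTot (mu : YoungDiagram) (k : ℕ) (S : Fin k → ℕ)
    (T : {x // x ∈ mu.cells} → ℕ) : ℕ × ℕ → ℕ :=
  fun p => if p.2 = 0 then cOf k S p.1 else bOf k S (Text mu T (p.1, p.2 - 1))

/-! ### F-side lemmas -/

section Fside

variable (mu : YoungDiagram) (m k : ℕ) (f : ℕ × ℕ → ℕ)

lemma col0_strict (hlen : mu.colLen 0 ≤ m)
    (hcol : ∀ p ∈ addColCells mu m, ∀ q ∈ addColCells mu m, p.2 = q.2 → p.1 < q.1 → f p < f q)
    {i i' : ℕ} (hii : i < i') (hi' : i' < m) : f (i, 0) < f (i', 0) :=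
  hcol _ (col_mem_addCol mu m hlen (by omega)) _ (col_mem_addCol mu m hlen hi') rfl hii

lemma col0_mono (hlen : mu.colLen 0 ≤ m)
    (hcol : ∀ p ∈ addColCells mu m, ∀ q ∈ addColCells mu m, p.2 = q.2 → p.1 < q.1 → f p < f q)
    {i i' : ℕ} (hii : i ≤ i') (hi' : i' < m) : f (i, 0) ≤ f (i', 0) := by
  rcases Nat.eq_or_lt_of_le hii with rfl | h
  · exact le_refl _
  · exact le_of_lt (col0_strict mu m f hlen hcol h hi')

lemma Tof_strict {y z : {x // x ∈ mu.cells}}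
    (h : f (y.1.1, y.1.2 + 1) < f (z.1.1, z.1.2 + 1)) : Tof mu f y < Tof mu f z :=
  rank_lt_rank mu.cells (fun y => f (y.1, y.2 + 1)) y.2 h

lemma Tof_lt (hmu : mu.card = k) (x : {x // x ∈ mu.cells}) : Tof mu f x < k := by
  have h : (mu.cells.filter fun y => f (y.1, y.2 + 1) < f (x.1.1, x.1.2 + 1)) ⊂ mu.cells := by
    rw [Finset.ssubset_iff_of_subset (filter_subset _ _)]
    exact ⟨x.1, x.2, by simp⟩
  have h2 := card_lt_card h
  have hc : mu.cells.card = k := hmu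
  unfold Tof rankSh
  omega

lemma rank_col_iff (hlen : mu.colLen 0 ≤ m)
    (hinj : ∀ p ∈ addColCells mu m, ∀ q ∈ addColCells mu m, f p = f q → p = q)
    {i : ℕ} (hi : i < m) {x : ℕ × ℕ} (hx : x ∈ mu.cells) :
    rankSh mu f (f (i, 0)) ≤ rankSh mu f (f (x.1, x.2 + 1)) ↔ f (i, 0) < f (x.1, x.2 + 1) := by
  constructor
  · intro h
    by_contra hc
    push_neg at hc
    have hne : f (x.1, x.2 + 1) ≠ f (i, 0) := by
      intro he
      have := hinj _ (shift_mem_addCol mu m hlen hx) _ (col_mem_addCol mu m hlen hi) he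
      simp [Prod.ext_iff] at this
    have hlt : f (x.1, x.2 + 1) < f (i, 0) := by omega
    have h2 := rank_lt_rank mu.cells (fun y => f (y.1, y.2 + 1)) hx hlt
    beta_reduce at h2
    unfold rankSh at h
    omega
  · intro h
    exact rank_mono mu.cells _ (le_of_lt h)

lemma Sof_mono : Monotone (Sof mu m k f) := by
  intro v w hvw
  unfold Sof
  have := card_le_card (monotone_filter_right (range m)
    (fun i _ (hi : rankSh mu f (f (i, 0)) ≤ (v : ℕ)) => le_trans hi (by exact_mod_cast hvw)))
  omega

lemma Sof_bounds (v : Fin k) : 1 ≤ Sof mu m k f v ∧ Sof mu m k f v ≤ m + 1 := by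
  unfold Sof
  have := card_le_card (filter_subset (fun i => rankSh mu f (f (i, 0)) ≤ (v : ℕ)) (range m))
  rw [card_range] at this
  omega

lemma Sof_le_iff (hlen : mu.colLen 0 ≤ m)
    (hinj : ∀ p ∈ addColCells mu m, ∀ q ∈ addColCells mu m, f p = f q → p = q)
    (hcol : ∀ p ∈ addColCells mu m, ∀ q ∈ addColCells mu m, p.2 = q.2 → p.1 < q.1 → f p < f q)
    {i : ℕ} (hi : i < m) (v : Fin k) :
    Sof mu m k f v ≤ i + 1 ↔ (v : ℕ) < rankSh mu f (f (i, 0)) := by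
  unfold Sof
  constructor
  · intro h
    by_contra hv
    push_neg at hv
    have hsub : range (i + 1) ⊆ (range m).filter
        (fun j => rankSh mu f (f (j, 0)) ≤ (v : ℕ)) := by
      intro j hj
      rw [mem_range] at hj
      refine mem_filter.2 ⟨mem_range.2 (by omega), ?_⟩
      exact le_trans (rank_mono mu.cells _ (col0_mono mu m f hlen hcol (by omega) hi)) hv
    have := card_le_card hsub
    rw [card_range] at this
    omega
  · intro hv
    have hsub : (range m).filter (fun j => rankSh mu f (f (j, 0)) ≤ (v : ℕ)) ⊆ range i := by
      intro j hj
      obtain ⟨hjm, hjv⟩ := mem_filter.1 hj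
      rw [mem_range] at hjm ⊢
      by_contra hc
      push_neg at hc
      have h1 : f (i, 0) ≤ f (j, 0) := col0_mono mu m f hlen hcol hc hjm
      have h2 := rank_mono mu.cells (fun y => f (y.1, y.2 + 1)) h1
      beta_reduce at h2
      unfold rankSh at hjv hv
      omega
    have := card_le_card hsub
    rw [card_range] at this
    omega

lemma cond7_count (hlen : mu.colLen 0 ≤ m)
    (hrow : ∀ p ∈ addColCells mu m, ∀ q ∈ addColCells mu m, p.1 = q.1 → p.2 < q.2 → f p < f q)
    (hcol : ∀ p ∈ addColCells mu m, ∀ q ∈ addColCells mu m, p.2 = q.2 → p.1 < q.1 → f p < f q)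
    (x : {x // x ∈ mu.cells}) :
    x.1.1 + 1 ≤ ((range m).filter fun i => rankSh mu f (f (i, 0)) ≤ Tof mu f x).card := by
  have hx' : ((x.1.1, x.1.2) : ℕ × ℕ) ∈ mu := by
    rw [Prod.mk.eta]
    exact (YoungDiagram.mem_cells _).1 x.2
  have hxm : x.1.1 < m := by
    have h0 : ((x.1.1, 0) : ℕ × ℕ) ∈ mu := mu.up_left_mem (le_refl _) (Nat.zero_le _) hx'
    have := YoungDiagram.mem_iff_lt_colLen.1 h0
    omega
  have hx1 : f (x.1.1, 0) < f (x.1.1, x.1.2 + 1) := by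
    apply hrow _ (col_mem_addCol mu m hlen hxm) _ (shift_mem_addCol mu m hlen x.2) rfl
    omega
  have hsub : range (x.1.1 + 1) ⊆ (range m).filter
      (fun i => rankSh mu f (f (i, 0)) ≤ Tof mu f x) := by
    intro i hi
    rw [mem_range] at hi
    refine mem_filter.2 ⟨mem_range.2 (by omega), ?_⟩
    have h1 : f (i, 0) ≤ f (x.1.1, x.1.2 + 1) :=
      le_trans (col0_mono mu m f hlen hcol (by omega) hxm) (le_of_lt hx1)
    exact rank_mono mu.cells _ h1
  have := card_le_card hsub
  rw [card_range] at this
  omega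

lemma crank_col (hlen : mu.colLen 0 ≤ m)
    (hcol : ∀ p ∈ addColCells mu m, ∀ q ∈ addColCells mu m, p.2 = q.2 → p.1 < q.1 → f p < f q)
    {i : ℕ} (hi : i < m) :
    ((range m).filter fun j => f (j, 0) < f (i, 0)).card = i := by
  have h : (range m).filter (fun j => f (j, 0) < f (i, 0)) = range i := by
    ext j
    simp only [mem_filter, mem_range]
    constructor
    · rintro ⟨hjm, hjf⟩
      by_contra hc
      push_neg at hc
      have := col0_mono mu m f hlen hcol hc hjm
      omega
    · intro hj
      exact ⟨by omega, col0_strict mu m f hlen hcol hj hi⟩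
  rw [h, card_range]

lemma f_eq_count (hlen : mu.colLen 0 ≤ m) (hmu : mu.card = k)
    (hinj : ∀ p ∈ addColCells mu m, ∀ q ∈ addColCells mu m, f p = f q → p = q)
    (hbound : ∀ p ∈ addColCells mu m, f p < k + m)
    {p : ℕ × ℕ} (hp : p ∈ addColCells mu m) :
    f p = ((range m).filter fun i => f (i, 0) < f p).card
        + (mu.cells.filter fun y => f (y.1, y.2 + 1) < f p).card := by
  rw [← addCol_filter_split mu m hlen f (f p)]
  exact (rank_eq_self (addColCells mu m) f (k + m) hinj hbound
    (by rw [addColCells_card mu m hlen, hmu]) hp).symm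

lemma rankSh_le (hmu : mu.card = k) (t : ℕ) : rankSh mu f t ≤ k := by
  have h1 := card_le_card (filter_subset (fun y => f (y.1, y.2 + 1) < t) mu.cells)
  have hc : mu.cells.card = k := hmu
  unfold rankSh
  omega

end Fside

/-! ### G-side lemmas -/

section Gside

variable (m k : ℕ) (S : Fin k → ℕ)

lemma finCardLtNat {k t : ℕ} (h : t ≤ k) :
    ((univ : Finset (Fin k)).filter fun w : Fin k => (w : ℕ) < t).card = t := by
  rw [finCardFilter (fun a => a < t)]
  have h2 : (range k).filter (fun a => a < t) = range t := by
    ext a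
    simp only [mem_filter, mem_range]
    omega
  rw [h2, card_range]

lemma bOf_val (w : Fin k) : bOf k S (w : ℕ) = (w : ℕ) + (S w - 1) := by
  unfold bOf
  rw [dif_pos w.2]

lemma c_lt_b (hS : Monotone S) {i : ℕ} {w : Fin k} (h : i + 2 ≤ S w) :
    cOf k S i < (w : ℕ) + (S w - 1) := by
  have hsub : ((univ : Finset (Fin k)).filter fun v : Fin k => S v ≤ i + 1)
      ⊆ (univ : Finset (Fin k)).filter fun v : Fin k => (v : ℕ) < (w : ℕ) := by
    intro v hv
    simp only [mem_filter, mem_univ, true_and] at hv ⊢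
    by_contra hc
    push_neg at hc
    have : S w ≤ S v := hS (Fin.le_def.2 hc)
    omega
  have h1 := card_le_card hsub
  rw [finCardLt] at h1
  unfold cOf
  omega

lemma b_lt_c (hS : Monotone S) {i : ℕ} {w : Fin k} (h : S w ≤ i + 1) :
    (w : ℕ) + (S w - 1) < cOf k S i := by
  have hsub : ((univ : Finset (Fin k)).filter fun v : Fin k => (v : ℕ) ≤ (w : ℕ))
      ⊆ (univ : Finset (Fin k)).filter fun v : Fin k => S v ≤ i + 1 := by
    intro v hv
    simp only [mem_filter, mem_univ, true_and] at hv ⊢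
    exact le_trans (hS (Fin.le_def.2 hv)) h
  have h1 := card_le_card hsub
  rw [finCardLe] at h1
  unfold cOf
  omega

lemma b_lt_c_iff (hS : Monotone S) {i : ℕ} (w : Fin k) :
    bOf k S (w : ℕ) < cOf k S i ↔ S w ≤ i + 1 := by
  rw [bOf_val]
  constructor
  · intro h
    by_contra hc
    push_neg at hc
    have := c_lt_b k S hS (show i + 2 ≤ S w by omega)
    omega
  · exact b_lt_c k S hS

lemma c_ne_b (hS : Monotone S) (i : ℕ) (w : Fin k) :
    cOf k S i ≠ (w : ℕ) + (S w - 1) := by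
  rcases le_or_gt (S w) (i + 1) with h | h
  · have := b_lt_c k S hS h; omega
  · have := c_lt_b k S hS (show i + 2 ≤ S w by omega); omega

lemma bOf_lt_iff (hS : Monotone S) {w w' : ℕ} (hw : w < k) (hw' : w' < k) :
    bOf k S w < bOf k S w' ↔ w < w' := by
  unfold bOf
  rw [dif_pos hw, dif_pos hw']
  constructor
  · intro h
    by_contra hc
    push_neg at hc
    have : S ⟨w', hw'⟩ ≤ S ⟨w, hw⟩ := hS (Fin.le_def.2 hc)
    omega
  · intro h
    have : S ⟨w, hw⟩ ≤ S ⟨w', hw'⟩ := hS (Fin.le_def.2 (le_of_lt h))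
    omega

lemma c_strict {i i' : ℕ} (h : i < i') : cOf k S i < cOf k S i' := by
  have hsub : ((univ : Finset (Fin k)).filter fun v : Fin k => S v ≤ i + 1)
      ⊆ (univ : Finset (Fin k)).filter fun v : Fin k => S v ≤ i' + 1 := by
    intro v hv
    simp only [mem_filter, mem_univ, true_and] at hv ⊢
    omega
  have h1 := card_le_card hsub
  unfold cOf
  omega

lemma cOf_le (i : ℕ) : cOf k S i ≤ i + k := by
  have h1 := card_le_card (filter_subset (fun v : Fin k => S v ≤ i + 1) univ)
  rw [card_univ, Fintype.card_fin] at h1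
  unfold cOf
  omega

end Gside

lemma gTot_col (mu : YoungDiagram) (k : ℕ) (S : Fin k → ℕ)
    (T : {x // x ∈ mu.cells} → ℕ) (i : ℕ) :
    gTot mu k S T (i, 0) = cOf k S i := if_pos rfl

lemma gTot_shift (mu : YoungDiagram) (k : ℕ) (S : Fin k → ℕ)
    (T : {x // x ∈ mu.cells} → ℕ) (y : ℕ × ℕ)
    (hy : y ∈ mu.cells) :
    gTot mu k S T (y.1, y.2 + 1) = bOf k S (T ⟨y, hy⟩) := by
  unfold gTot
  rw [if_neg (by simp)]
  simp only [Nat.add_sub_cancel]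
  unfold Text
  rw [Prod.mk.eta, dif_pos hy]

/-! ### Round trips -/

section RoundTrip

variable (mu : YoungDiagram) (m k : ℕ)

lemma GF_eq (f : ℕ × ℕ → ℕ) (hlen : mu.colLen 0 ≤ m) (hmu : mu.card = k)
    (hinj : ∀ p ∈ addColCells mu m, ∀ q ∈ addColCells mu m, f p = f q → p = q)
    (hbound : ∀ p ∈ addColCells mu m, f p < k + m)
    (hrow : ∀ p ∈ addColCells mu m, ∀ q ∈ addColCells mu m, p.1 = q.1 → p.2 < q.2 → f p < f q)
    (hcol : ∀ p ∈ addColCells mu m, ∀ q ∈ addColCells mu m, p.2 = q.2 → p.1 < q.1 → f p < f q)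
    {p : ℕ × ℕ} (hp : p ∈ addColCells mu m) :
    gTot mu k (Sof mu m k f) (Tof mu f) p = f p := by
  rcases mem_addCol_cases mu m hlen hp with ⟨h0, him⟩ | ⟨h0, hmem⟩
  · -- column cell
    obtain ⟨i, j⟩ := p
    simp only at h0 him
    subst h0
    rw [gTot_col]
    unfold cOf
    have hcong : ((univ : Finset (Fin k)).filter fun v : Fin k => Sof mu m k f v ≤ i + 1)
        = (univ : Finset (Fin k)).filter fun v : Fin k =>
            (v : ℕ) < rankSh mu f (f (i, 0)) :=
      filter_congr fun v _ => Sof_le_iff mu m k f hlen hinj hcol him v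
    rw [hcong, finCardLtNat (rankSh_le mu k f hmu _)]
    have hfe := f_eq_count mu m k f hlen hmu hinj hbound hp
    have hcr := crank_col mu m f hlen hcol him
    have hT : rankSh mu f (f (i, 0)) = (mu.cells.filter fun y =>
        f (y.1, y.2 + 1) < f (i, 0)).card := rfl
    omega
  · -- shifted cell
    have hps : ((p.1, (p.2 - 1) + 1) : ℕ × ℕ) = p := by
      rw [Prod.ext_iff]
      constructor
      · rfl
      · simp; omega
    have hx : ((p.1, p.2 - 1) : ℕ × ℕ) ∈ mu.cells := hmem
    rw [← hps, gTot_shift mu k _ _ _ hmem]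
    set x : {x // x ∈ mu.cells} := ⟨(p.1, p.2 - 1), hmem⟩ with hxdef
    have hTk : Tof mu f x < k := Tof_lt mu k f hmu x
    unfold bOf
    rw [dif_pos hTk]
    have hSval : Sof mu m k f ⟨Tof mu f x, hTk⟩
        = 1 + ((range m).filter fun i => rankSh mu f (f (i, 0)) ≤ Tof mu f x).card := rfl
    rw [hSval]
    have hcong : ((range m).filter fun i => rankSh mu f (f (i, 0)) ≤ Tof mu f x)
        = (range m).filter fun i => f (i, 0) < f (x.1.1, x.1.2 + 1) :=
      filter_congr fun i hi =>
        rank_col_iff mu m f hlen hinj (mem_range.1 hi) (x := x.1) x.2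
    rw [hcong]
    have hsm : ((x.1.1, x.1.2 + 1) : ℕ × ℕ) ∈ addColCells mu m :=
      shift_mem_addCol mu m hlen x.2
    have hfe := f_eq_count mu m k f hlen hmu hinj hbound hsm
    have hT : Tof mu f x = (mu.cells.filter fun y =>
        f (y.1, y.2 + 1) < f (x.1.1, x.1.2 + 1)).card := rfl
    have hgoal : f (p.1, p.2 - 1 + 1) = f (x.1.1, x.1.2 + 1) := rfl
    omega

lemma fT_inj_cells (mu : YoungDiagram) (T : {x // x ∈ mu.cells} → ℕ)
    (hTinj : Function.Injective T) :
    ∀ a ∈ mu.cells, ∀ b ∈ mu.cells, Text mu T a = Text mu T b → a = b := by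
  intro a ha b hb h
  unfold Text at h
  rw [dif_pos ha, dif_pos hb] at h
  have := hTinj h
  exact congrArg Subtype.val this

lemma Text_lt (mu : YoungDiagram) (k : ℕ) (T : {x // x ∈ mu.cells} → ℕ)
    (hTb : ∀ x, T x < k) : ∀ a ∈ mu.cells, Text mu T a < k := by
  intro a ha
  unfold Text
  rw [dif_pos ha]
  exact hTb _

lemma FG_T (S : Fin k → ℕ) (T : {x // x ∈ mu.cells} → ℕ) (hmu : mu.card = k)
    (hS : Monotone S) (hTinj : Function.Injective T) (hTb : ∀ x, T x < k)
    (x : {x // x ∈ mu.cells}) :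
    Tof mu (gTot mu k S T) x = T x := by
  unfold Tof rankSh
  have hx : gTot mu k S T (x.1.1, x.1.2 + 1) = bOf k S (Text mu T x.1) := by
    rw [gTot_shift mu k S T x.1 x.2]
    unfold Text
    rw [dif_pos x.2]
  rw [hx]
  have hcong : (mu.cells.filter fun y =>
        gTot mu k S T (y.1, y.2 + 1) < bOf k S (Text mu T x.1))
      = mu.cells.filter fun y => Text mu T y < Text mu T x.1 := by
    apply filter_congr
    intro y hy
    rw [gTot_shift mu k S T y hy]
    have hTy : Text mu T y = T ⟨y, hy⟩ := dif_pos hy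
    rw [← hTy]
    exact bOf_lt_iff k S hS (Text_lt mu k T hTb y hy) (Text_lt mu k T hTb x.1 x.2)
  rw [hcong]
  have := rank_eq_self mu.cells (Text mu T) k (fT_inj_cells mu T hTinj)
    (Text_lt mu k T hTb) hmu x.2
  rw [this]
  unfold Text
  rw [dif_pos x.2]

lemma FG_S (S : Fin k → ℕ) (T : {x // x ∈ mu.cells} → ℕ) (hmu : mu.card = k)
    (hS : Monotone S) (hS1 : ∀ v, 1 ≤ S v) (hSn : ∀ v, S v ≤ m + 1)
    (hTinj : Function.Injective T) (hTb : ∀ x, T x < k) (v : Fin k) :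
    Sof mu m k (gTot mu k S T) v = S v := by
  unfold Sof
  have hstep : ∀ i ∈ range m,
      (rankSh mu (gTot mu k S T) (gTot mu k S T (i, 0)) ≤ (v : ℕ) ↔ i + 2 ≤ S v) := by
    intro i _
    rw [gTot_col]
    have hr : rankSh mu (gTot mu k S T) (cOf k S i)
        = ((univ : Finset (Fin k)).filter fun w : Fin k => S w ≤ i + 1).card := by
      unfold rankSh
      have hcong : (mu.cells.filter fun y => gTot mu k S T (y.1, y.2 + 1) < cOf k S i)
          = mu.cells.filter fun y => bOf k S (Text mu T y) < cOf k S i := by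
        apply filter_congr
        intro y hy
        rw [gTot_shift mu k S T y hy]
        have hTy : Text mu T y = T ⟨y, hy⟩ := dif_pos hy
        rw [← hTy]
      rw [hcong]
      rw [count_comp mu.cells (Text mu T) k (fT_inj_cells mu T hTinj)
        (Text_lt mu k T hTb) hmu (fun t => bOf k S t < cOf k S i)]
      apply congrArg
      apply filter_congr
      intro w _
      exact b_lt_c_iff k S hS w
    rw [hr]
    constructor
    · intro h
      by_contra hc
      push_neg at hc
      have hsub : ((univ : Finset (Fin k)).filter fun w : Fin k => (w : ℕ) ≤ (v : ℕ))
          ⊆ (univ : Finset (Fin k)).filter fun w : Fin k => S w ≤ i + 1 := by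
        intro w hw
        simp only [mem_filter, mem_univ, true_and] at hw ⊢
        exact le_trans (hS (Fin.le_def.2 hw)) (by omega)
      have h1 := card_le_card hsub
      rw [finCardLe] at h1
      omega
    · intro h
      have hsub : ((univ : Finset (Fin k)).filter fun w : Fin k => S w ≤ i + 1)
          ⊆ (univ : Finset (Fin k)).filter fun w : Fin k => (w : ℕ) < (v : ℕ) := by
        intro w hw
        simp only [mem_filter, mem_univ, true_and] at hw ⊢
        by_contra hc
        push_neg at hc
        have : S v ≤ S w := hS (Fin.le_def.2 hc)
        omega
      have h1 := card_le_card hsub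
      rw [finCardLt] at h1
      omega
  rw [filter_congr hstep]
  have hr2 : (range m).filter (fun i => i + 2 ≤ S v) = range (S v - 1) := by
    ext j
    simp only [mem_filter, mem_range]
    have := hSn v
    omega
  rw [hr2, card_range]
  have := hS1 v
  omega

end RoundTrip

/-! ### Well-definedness of the inverse map, congruence lemmas -/

section Gwd

variable (mu : YoungDiagram) (m k : ℕ) (S : Fin k → ℕ) (T : {x // x ∈ mu.cells} → ℕ)

lemma gTot_bOf_val {y : ℕ × ℕ} (hy : y ∈ mu.cells) (hTb : ∀ x, T x < k) :
    gTot mu k S T (y.1, y.2 + 1) = (T ⟨y, hy⟩ : ℕ) + (S ⟨T ⟨y, hy⟩, hTb _⟩ - 1) := by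
  rw [gTot_shift mu k S T y hy]
  unfold bOf
  rw [dif_pos (hTb ⟨y, hy⟩)]

lemma G_inj (hlen : mu.colLen 0 ≤ m) (hS : Monotone S)
    (hTinj : Function.Injective T) (hTb : ∀ x, T x < k) :
    ∀ p ∈ addColCells mu m, ∀ q ∈ addColCells mu m,
      gTot mu k S T p = gTot mu k S T q → p = q := by
  have key : ∀ p ∈ addColCells mu m, ∀ q ∈ addColCells mu m,
      p.2 = 0 → 0 < q.2 → gTot mu k S T p ≠ gTot mu k S T q := by
    intro p hp q hq hp0 hq0 he
    obtain ⟨h0, hmem⟩ := (mem_addCol_cases mu m hlen hq).resolve_left (by omega)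
    have hq' : ((q.1, q.2 - 1 + 1) : ℕ × ℕ) = q := by
      rw [Prod.ext_iff]; exact ⟨rfl, by simp; omega⟩
    have e1 : gTot mu k S T p = cOf k S p.1 := by
      rw [show p = (p.1, 0) from by rw [Prod.ext_iff]; exact ⟨rfl, hp0⟩]
      exact gTot_col mu k S T p.1
    have e2 := gTot_bOf_val mu k S T (y := (q.1, q.2 - 1)) hmem hTb
    rw [hq'] at e2
    rw [e1, e2] at he
    exact c_ne_b k S hS p.1 ⟨T ⟨(q.1, q.2 - 1), hmem⟩, hTb _⟩ he
  intro p hp q hq he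
  rcases mem_addCol_cases mu m hlen hp with ⟨hp0, hpm⟩ | ⟨hp0, hpmem⟩ <;>
    rcases mem_addCol_cases mu m hlen hq with ⟨hq0, hqm⟩ | ⟨hq0, hqmem⟩
  · -- both column
    have e1 : gTot mu k S T p = cOf k S p.1 := by
      rw [show p = (p.1, 0) from by rw [Prod.ext_iff]; exact ⟨rfl, hp0⟩]
      exact gTot_col mu k S T p.1
    have e2 : gTot mu k S T q = cOf k S q.1 := by
      rw [show q = (q.1, 0) from by rw [Prod.ext_iff]; exact ⟨rfl, hq0⟩]
      exact gTot_col mu k S T q.1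
    rw [e1, e2] at he
    have : p.1 = q.1 := by
      by_contra hc
      rcases Nat.lt_or_ge p.1 q.1 with h | h
      · have := c_strict k S h; omega
      · have : q.1 < p.1 := by omega
        have := c_strict k S this; omega
    rw [Prod.ext_iff]; exact ⟨this, by omega⟩
  · exact absurd he (key p hp q hq hp0 (by omega))
  · exact absurd he.symm (key q hq p hp hq0 (by omega))
  · -- both shifted
    have hp' : ((p.1, p.2 - 1 + 1) : ℕ × ℕ) = p := by
      rw [Prod.ext_iff]; exact ⟨rfl, by simp; omega⟩
    have hq' : ((q.1, q.2 - 1 + 1) : ℕ × ℕ) = q := by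
      rw [Prod.ext_iff]; exact ⟨rfl, by simp; omega⟩
    have e1 := gTot_shift mu k S T (p.1, p.2 - 1) hpmem
    have e2 := gTot_shift mu k S T (q.1, q.2 - 1) hqmem
    rw [hp'] at e1
    rw [hq'] at e2
    rw [e1, e2] at he
    have hv : T ⟨(p.1, p.2 - 1), hpmem⟩ = T ⟨(q.1, q.2 - 1), hqmem⟩ := by
      by_contra hc
      rcases Nat.lt_or_ge (T ⟨(p.1, p.2 - 1), hpmem⟩) (T ⟨(q.1, q.2 - 1), hqmem⟩) with h | h
      · have := (bOf_lt_iff k S hS (hTb _) (hTb _)).2 h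
        omega
      · have h' : T ⟨(q.1, q.2 - 1), hqmem⟩ < T ⟨(p.1, p.2 - 1), hpmem⟩ := by omega
        have := (bOf_lt_iff k S hS (hTb _) (hTb _)).2 h'
        omega
    have := congrArg Subtype.val (hTinj hv)
    simp only [Prod.ext_iff] at this
    rw [Prod.ext_iff]
    exact ⟨this.1, by have := this.2; omega⟩

lemma G_bound (hlen : mu.colLen 0 ≤ m) (hSn : ∀ v, S v ≤ m + 1) (hTb : ∀ x, T x < k) :
    ∀ p ∈ addColCells mu m, gTot mu k S T p < k + m := by
  intro p hp
  rcases mem_addCol_cases mu m hlen hp with ⟨hp0, hpm⟩ | ⟨hp0, hpmem⟩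
  · have e1 : gTot mu k S T p = cOf k S p.1 := by
      rw [show p = (p.1, 0) from by rw [Prod.ext_iff]; exact ⟨rfl, hp0⟩]
      exact gTot_col mu k S T p.1
    have := cOf_le k S p.1
    omega
  · have hp' : ((p.1, p.2 - 1 + 1) : ℕ × ℕ) = p := by
      rw [Prod.ext_iff]; exact ⟨rfl, by simp; omega⟩
    have e1 := gTot_bOf_val mu k S T (y := (p.1, p.2 - 1)) hpmem hTb
    rw [hp'] at e1
    have h1 := hTb ⟨(p.1, p.2 - 1), hpmem⟩
    have h2 := hSn ⟨T ⟨(p.1, p.2 - 1), hpmem⟩, hTb _⟩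
    omega

lemma G_row (hlen : mu.colLen 0 ≤ m) (hS : Monotone S) (hTb : ∀ x, T x < k)
    (hTrow : ∀ a b : {x // x ∈ mu.cells}, a.1.1 = b.1.1 → a.1.2 < b.1.2 → T a < T b)
    (hcond7 : ∀ (x : {x // x ∈ mu.cells}) (h : T x < k), x.1.1 + 1 < S ⟨T x, h⟩) :
    ∀ p ∈ addColCells mu m, ∀ q ∈ addColCells mu m,
      p.1 = q.1 → p.2 < q.2 → gTot mu k S T p < gTot mu k S T q := by
  intro p hp q hq h1 h2
  obtain ⟨hq0, hqmem⟩ := (mem_addCol_cases mu m hlen hq).resolve_left (by omega)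
  have hq' : ((q.1, q.2 - 1 + 1) : ℕ × ℕ) = q := by
    rw [Prod.ext_iff]; exact ⟨rfl, by simp; omega⟩
  have e2 := gTot_bOf_val mu k S T (y := (q.1, q.2 - 1)) hqmem hTb
  rw [hq'] at e2
  rcases Nat.eq_zero_or_pos p.2 with hp0 | hp0
  · have e1 : gTot mu k S T p = cOf k S p.1 := by
      rw [show p = (p.1, 0) from by rw [Prod.ext_iff]; exact ⟨rfl, hp0⟩]
      exact gTot_col mu k S T p.1
    rw [e1, e2]
    apply c_lt_b k S hS (w := ⟨T ⟨(q.1, q.2 - 1), hqmem⟩, hTb _⟩)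
    have := hcond7 ⟨(q.1, q.2 - 1), hqmem⟩ (hTb _)
    simp only at this
    omega
  · obtain ⟨hp0', hpmem⟩ := (mem_addCol_cases mu m hlen hp).resolve_left (by omega)
    have hp' : ((p.1, p.2 - 1 + 1) : ℕ × ℕ) = p := by
      rw [Prod.ext_iff]; exact ⟨rfl, by simp; omega⟩
    have e1 := gTot_shift mu k S T (p.1, p.2 - 1) hpmem
    rw [hp'] at e1
    have e2' := gTot_shift mu k S T (q.1, q.2 - 1) hqmem
    rw [hq'] at e2'
    rw [e1, e2']
    rw [bOf_lt_iff k S hS (hTb _) (hTb _)]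
    exact hTrow ⟨(p.1, p.2 - 1), hpmem⟩ ⟨(q.1, q.2 - 1), hqmem⟩ h1 (by simp; omega)

lemma G_col (hlen : mu.colLen 0 ≤ m) (hS : Monotone S) (hTb : ∀ x, T x < k)
    (hTcol : ∀ a b : {x // x ∈ mu.cells}, a.1.2 = b.1.2 → a.1.1 < b.1.1 → T a < T b) :
    ∀ p ∈ addColCells mu m, ∀ q ∈ addColCells mu m,
      p.2 = q.2 → p.1 < q.1 → gTot mu k S T p < gTot mu k S T q := by
  intro p hp q hq h1 h2
  rcases Nat.eq_zero_or_pos p.2 with hp0 | hp0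
  · have e1 : gTot mu k S T p = cOf k S p.1 := by
      rw [show p = (p.1, 0) from by rw [Prod.ext_iff]; exact ⟨rfl, hp0⟩]
      exact gTot_col mu k S T p.1
    have e2 : gTot mu k S T q = cOf k S q.1 := by
      rw [show q = (q.1, 0) from by rw [Prod.ext_iff]; exact ⟨rfl, by omega⟩]
      exact gTot_col mu k S T q.1
    rw [e1, e2]
    exact c_strict k S h2
  · obtain ⟨hp0', hpmem⟩ := (mem_addCol_cases mu m hlen hp).resolve_left (by omega)
    obtain ⟨hq0, hqmem⟩ := (mem_addCol_cases mu m hlen hq).resolve_left (by omega)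
    have hp' : ((p.1, p.2 - 1 + 1) : ℕ × ℕ) = p := by
      rw [Prod.ext_iff]; exact ⟨rfl, by simp; omega⟩
    have hq' : ((q.1, q.2 - 1 + 1) : ℕ × ℕ) = q := by
      rw [Prod.ext_iff]; exact ⟨rfl, by simp; omega⟩
    have e1 := gTot_shift mu k S T (p.1, p.2 - 1) hpmem
    rw [hp'] at e1
    have e2 := gTot_shift mu k S T (q.1, q.2 - 1) hqmem
    rw [hq'] at e2
    rw [e1, e2]
    rw [bOf_lt_iff k S hS (hTb _) (hTb _)]
    exact hTcol ⟨(p.1, p.2 - 1), hpmem⟩ ⟨(q.1, q.2 - 1), hqmem⟩ (by simp; omega) h2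

end Gwd

/-! ### fTot and congruence -/

noncomputable def fTot (mu : YoungDiagram) (m : ℕ)
    (U : {x // x ∈ addColCells mu m} → ℕ) : ℕ × ℕ → ℕ :=
  fun p => if h : p ∈ addColCells mu m then U ⟨p, h⟩ else 0

lemma fTot_mem (mu : YoungDiagram) (m : ℕ) (U : {x // x ∈ addColCells mu m} → ℕ)
    {p : ℕ × ℕ} (hp : p ∈ addColCells mu m) : fTot mu m U p = U ⟨p, hp⟩ := dif_pos hp

lemma rankSh_congr (mu : YoungDiagram) (f f' : ℕ × ℕ → ℕ)
    (h : ∀ y ∈ mu.cells, f (y.1, y.2 + 1) = f' (y.1, y.2 + 1)) (t : ℕ) :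
    rankSh mu f t = rankSh mu f' t := by
  unfold rankSh
  apply congrArg
  apply filter_congr
  intro y hy
  rw [h y hy]

lemma Tof_congr (mu : YoungDiagram) (m : ℕ) (hlen : mu.colLen 0 ≤ m)
    (f f' : ℕ × ℕ → ℕ) (h : ∀ p ∈ addColCells mu m, f p = f' p)
    (x : {x // x ∈ mu.cells}) : Tof mu f x = Tof mu f' x := by
  unfold Tof
  rw [rankSh_congr mu f f' (fun y hy => h _ (shift_mem_addCol mu m hlen hy)),
    h _ (shift_mem_addCol mu m hlen x.2)]

lemma Sof_congr (mu : YoungDiagram) (m k : ℕ) (hlen : mu.colLen 0 ≤ m)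
    (f f' : ℕ × ℕ → ℕ) (h : ∀ p ∈ addColCells mu m, f p = f' p)
    (v : Fin k) : Sof mu m k f v = Sof mu m k f' v := by
  unfold Sof
  have : ((range m).filter fun i => rankSh mu f (f (i, 0)) ≤ (v : ℕ))
      = (range m).filter fun i => rankSh mu f' (f' (i, 0)) ≤ (v : ℕ) := by
    apply filter_congr
    intro i hi
    rw [rankSh_congr mu f f' (fun y hy => h _ (shift_mem_addCol mu m hlen hy)),
      h _ (col_mem_addCol mu m hlen (mem_range.1 hi))]
  rw [this]

/-! ### Packaging -/

lemma fTot_props (mu : YoungDiagram) (m k : ℕ) (hlen : mu.colLen 0 ≤ m) (hmu : mu.card = k)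
    (U : {x // x ∈ addColCells mu m} → ℕ)
    (hUinj : Function.Injective U) (hUb : ∀ x, U x < (addColCells mu m).card)
    (hUrow : ∀ a b : {x // x ∈ addColCells mu m}, a.1.1 = b.1.1 → a.1.2 < b.1.2 → U a < U b)
    (hUcol : ∀ a b : {x // x ∈ addColCells mu m}, a.1.2 = b.1.2 → a.1.1 < b.1.1 → U a < U b) :
    (∀ p ∈ addColCells mu m, ∀ q ∈ addColCells mu m,
        fTot mu m U p = fTot mu m U q → p = q) ∧
    (∀ p ∈ addColCells mu m, fTot mu m U p < k + m) ∧
    (∀ p ∈ addColCells mu m, ∀ q ∈ addColCells mu m,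
        p.1 = q.1 → p.2 < q.2 → fTot mu m U p < fTot mu m U q) ∧
    (∀ p ∈ addColCells mu m, ∀ q ∈ addColCells mu m,
        p.2 = q.2 → p.1 < q.1 → fTot mu m U p < fTot mu m U q) := by
  refine ⟨?_, ?_, ?_, ?_⟩
  · intro p hp q hq he
    rw [fTot_mem mu m U hp, fTot_mem mu m U hq] at he
    exact congrArg Subtype.val (hUinj he)
  · intro p hp
    rw [fTot_mem mu m U hp]
    have := hUb ⟨p, hp⟩
    rw [addColCells_card mu m hlen, hmu] at this
    omega
  · intro p hp q hq h1 h2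
    rw [fTot_mem mu m U hp, fTot_mem mu m U hq]
    exact hUrow ⟨p, hp⟩ ⟨q, hq⟩ h1 h2
  · intro p hp q hq h1 h2
    rw [fTot_mem mu m U hp, fTot_mem mu m U hq]
    exact hUcol ⟨p, hp⟩ ⟨q, hq⟩ h1 h2

theorem syt_addColumn_eq_pairs_aux (n k : ℕ) (hn : 1 ≤ n) (mu : YoungDiagram)
    (hmu : mu.card = k) (hlen : mu.colLen 0 < n) :
    (Nat.card {T : {x // x ∈ addColCells mu (n-1)} → ℕ //
      Function.Injective T ∧ (∀ x, T x < (addColCells mu (n-1)).card) ∧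
      (∀ a b : {x // x ∈ addColCells mu (n-1)}, a.1.1 = b.1.1 → a.1.2 < b.1.2 → T a < T b) ∧
      (∀ a b : {x // x ∈ addColCells mu (n-1)}, a.1.2 = b.1.2 → a.1.1 < b.1.1 → T a < T b)}) =
      Nat.card {ST : (Fin k → ℕ) × ({x // x ∈ mu.cells} → ℕ) //
        Monotone ST.1 ∧ (∀ i, 1 ≤ ST.1 i ∧ ST.1 i ≤ n) ∧
        Function.Injective ST.2 ∧ (∀ x, ST.2 x < k) ∧
        (∀ a b : {x // x ∈ mu.cells}, a.1.1 = b.1.1 → a.1.2 < b.1.2 → ST.2 a < ST.2 b) ∧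
        (∀ a b : {x // x ∈ mu.cells}, a.1.2 = b.1.2 → a.1.1 < b.1.1 → ST.2 a < ST.2 b) ∧
        (∀ (x : {x // x ∈ mu.cells}) (h : ST.2 x < k), x.1.1 + 1 < ST.1 ⟨ST.2 x, h⟩)} := by
  obtain ⟨m, rfl⟩ : ∃ m, n = m + 1 := ⟨n - 1, by omega⟩
  simp only [Nat.add_sub_cancel]
  have hlen' : mu.colLen 0 ≤ m := by omega
  apply Nat.card_congr
  refine
    { toFun := fun U =>
        ⟨(Sof mu m k (fTot mu m U.1), Tof mu (fTot mu m U.1)), ?_⟩,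
      invFun := fun ST =>
        ⟨fun x => gTot mu k ST.1.1 ST.1.2 x.1, ?_⟩,
      left_inv := ?_, right_inv := ?_ }
  · -- toFun well-defined
    obtain ⟨U, hUinj, hUb, hUrow, hUcol⟩ := U
    obtain ⟨hinj, hbound, hrow, hcol⟩ :=
      fTot_props mu m k hlen' hmu U hUinj hUb hUrow hUcol
    set f := fTot mu m U with hf
    refine ⟨Sof_mono mu m k f, fun v => Sof_bounds mu m k f v, ?_, fun x => Tof_lt mu k f hmu x,
      ?_, ?_, ?_⟩
    · -- injectivity of Tof
      intro a b h
      replace h : Tof mu f a = Tof mu f b := h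
      rcases lt_trichotomy (f (a.1.1, a.1.2 + 1)) (f (b.1.1, b.1.2 + 1)) with hlt | heq | hgt
      · exact absurd (Tof_strict mu f hlt) (by omega)
      · have := hinj _ (shift_mem_addCol mu m hlen' a.2) _ (shift_mem_addCol mu m hlen' b.2) heq
        simp only [Prod.mk.injEq] at this
        exact Subtype.ext (Prod.ext this.1 (by omega))
      · exact absurd (Tof_strict mu f hgt) (by omega)
    · -- row strict
      intro a b h1 h2
      apply Tof_strict mu f
      exact hrow _ (shift_mem_addCol mu m hlen' a.2) _ (shift_mem_addCol mu m hlen' b.2)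
        h1 (by omega)
    · -- col strict
      intro a b h1 h2
      apply Tof_strict mu f
      exact hcol _ (shift_mem_addCol mu m hlen' a.2) _ (shift_mem_addCol mu m hlen' b.2)
        (by simp only [h1]) h2
    · -- condition 7
      intro x h
      have hcc := cond7_count mu m f hlen' hrow hcol x
      have hSv : Sof mu m k f ⟨Tof mu f x, h⟩
          = 1 + ((range m).filter fun i => rankSh mu f (f (i, 0)) ≤ Tof mu f x).card := rfl
      have hred1 : (Sof mu m k f, Tof mu f).1 ⟨(Sof mu m k f, Tof mu f).2 x, h⟩
          = Sof mu m k f ⟨Tof mu f x, h⟩ := rfl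
      have hred2 : (Sof mu m k f, Tof mu f).2 x = Tof mu f x := rfl
      omega
  · -- invFun well-defined
    obtain ⟨⟨S, T⟩, hSmono, hSb, hTinj, hTb, hTrow, hTcol, h7⟩ := ST
    have hSn : ∀ v, S v ≤ m + 1 := fun v => (hSb v).2
    refine ⟨?_, ?_, ?_, ?_⟩
    · intro a b h
      exact Subtype.ext (G_inj mu m k S T hlen' hSmono hTinj hTb _ a.2 _ b.2 h)
    · intro x
      show gTot mu k S T x.1 < (addColCells mu m).card
      rw [addColCells_card mu m hlen', hmu]
      have := G_bound mu m k S T hlen' hSn hTb _ x.2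
      omega
    · intro a b h1 h2
      exact G_row mu m k S T hlen' hSmono hTb hTrow h7 _ a.2 _ b.2 h1 h2
    · intro a b h1 h2
      exact G_col mu m k S T hlen' hSmono hTb hTcol _ a.2 _ b.2 h1 h2
  · -- left inverse
    intro U
    apply Subtype.ext
    funext x
    obtain ⟨hinj, hbound, hrow, hcol⟩ :=
      fTot_props mu m k hlen' hmu U.1 U.2.1 U.2.2.1 U.2.2.2.1 U.2.2.2.2
    exact (GF_eq mu m k (fTot mu m U.1) hlen' hmu hinj hbound hrow hcol x.2).trans
      (fTot_mem mu m U.1 x.2)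
  · -- right inverse
    intro ST
    obtain ⟨⟨S, T⟩, hSmono, hSb, hTinj, hTb, hTrow, hTcol, h7⟩ := ST
    apply Subtype.ext
    have hcong : ∀ p ∈ addColCells mu m,
        fTot mu m (fun x : {x // x ∈ addColCells mu m} => gTot mu k S T x.1) p
          = gTot mu k S T p := fun p hp => fTot_mem mu m _ hp
    have hS1 : ∀ v, 1 ≤ S v := fun v => (hSb v).1
    have hSn : ∀ v, S v ≤ m + 1 := fun v => (hSb v).2
    refine Prod.ext ?_ ?_
    · funext v
      exact (Sof_congr mu m k hlen' _ _ hcong v).trans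
        (FG_S mu m k S T hmu hSmono hS1 hSn hTinj hTb v)
    · funext x
      exact (Tof_congr mu m hlen' _ _ hcong x).trans
        (FG_T mu k S T hmu hSmono hTinj hTb x)


end SytAux

/-- for a partition `μ` of `k` with fewer than `n` parts, the number of
standard Young tableaux of shape `μ + (1^{n-1})` equals the number of pairs `(S, T)` where
`S` is a weakly increasing sequence of length `k` with entries in `{1,…,n}` (a semistandard
tableau of shape `(k)`) and `T` is a standard Young tableau of shape `μ` (with values
`0,…,k-1` here), such that whenever value `v` of `T` lies in (0-indexed) row `r`, the
`(v+1)`-st smallest entry of `S`, namely `S v`, is strictly greater than the 1-indexed row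
`r + 1`. -/
theorem syt_addColumn_eq_pairs (n k : ℕ) (hn : 1 ≤ n) (mu : YoungDiagram)
    (hmu : mu.card = k) (hlen : mu.colLen 0 < n) :
    sytCountCells (addColCells mu (n - 1)) =
      Nat.card {ST : (Fin k → ℕ) × (mu.cells → ℕ) //
        Monotone ST.1 ∧ (∀ i, 1 ≤ ST.1 i ∧ ST.1 i ≤ n) ∧
        Function.Injective ST.2 ∧ (∀ x, ST.2 x < k) ∧
        (∀ a b : mu.cells, a.1.1 = b.1.1 → a.1.2 < b.1.2 → ST.2 a < ST.2 b) ∧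
        (∀ a b : mu.cells, a.1.2 = b.1.2 → a.1.1 < b.1.1 → ST.2 a < ST.2 b) ∧
        (∀ (x : mu.cells) (h : ST.2 x < k), x.1.1 + 1 < ST.1 ⟨ST.2 x, h⟩)} := by
  unfold sytCountCells
  exact syt_addColumn_eq_pairs_aux n k hn mu hmu hlen
end
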